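/- arXiv:1212.4210 — 5 statements merged into one kernel-verified Lean document; each statement's English description precedes it below -/
import Mathlib

section
/- Theorem 1 (CSP, noiseless individual recovery). Fix τ1 > 0 and τ2 ∈ (0,1). Then the P-probability of the set of matrices A ∈ ℝ^{d×n} for which every CSP estimate x̂ computed from the noiseless measurements y = A x_o satisfies ‖x̂ − x_o‖₂ ≤ δ·√((1+τ1)/(1−τ2)) is at least 1 − 2^r·exp((d/2)(τ2 + log(1−τ2))) − exp(−(d/2)(τ1 − log(1+τ1))). -/
open MeasureTheory ProbabilityTheory

/-- The Euclidean (`ℓ₂`) norm of a vector in `ℝ^m`. -/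
noncomputable def norm2 {m : ℕ} (x : Fin m → ℝ) : ℝ := Real.sqrt (∑ i, (x i) ^ 2)

/-- The action of a `d × n` matrix `A` on a vector `x ∈ ℝ^n`. -/
def mulVec' {d n : ℕ} (A : Fin d → Fin n → ℝ) (x : Fin n → ℝ) : Fin d → ℝ :=
  fun i => ∑ j, A i j * x j

/-- `xhat` is a CSP estimate for measurements `y` (w.r.t. codebook `C` and matrix `A`):
it belongs to `C` and minimizes `‖y - A c‖₂` over `c ∈ C`. -/
def IsCSPEstimate {d n : ℕ} (C : Finset (Fin n → ℝ)) (A : Fin d → Fin n → ℝ)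
    (y : Fin d → ℝ) (xhat : Fin n → ℝ) : Prop :=
  xhat ∈ C ∧ ∀ c ∈ C, norm2 (y - mulVec' A xhat) ≤ norm2 (y - mulVec' A c)

/-- The law of a `d × n` matrix with i.i.d. standard Gaussian `N(0,1)` entries. -/
noncomputable def gaussMatrix (d n : ℕ) : Measure (Fin d → Fin n → ℝ) :=
  Measure.pi fun _ => Measure.pi fun _ => gaussianReal 0 1


open Real
open scoped ENNReal

lemma gauss_int_real (s a b : ℝ) (h : 2*s*a^2 < 1) :
    ∫ x : ℝ, gaussianPDFReal 0 1 x * Real.exp (s*(a*x+b)^2)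
      = (Real.sqrt (1-2*s*a^2))⁻¹ * Real.exp (s*b^2/(1-2*s*a^2)) := by
  have hcpos : (0:ℝ) < 1-2*s*a^2 := by linarith
  have hcne : (1-2*s*a^2 : ℝ) ≠ 0 := hcpos.ne'
  have key : ∀ x : ℝ, gaussianPDFReal 0 1 x * Real.exp (s*(a*x+b)^2)
      = ((Real.sqrt (2*π))⁻¹ * Real.exp (s*b^2/(1-2*s*a^2)))
        * Real.exp (-((1-2*s*a^2)/2)*(x-2*s*a*b/(1-2*s*a^2))^2) := by
    intro x
    rw [gaussianPDFReal]
    push_cast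
    rw [mul_one, mul_assoc, ← Real.exp_add, mul_assoc, ← Real.exp_add]
    congr 2
    field_simp
    ring
  simp_rw [key]
  rw [integral_const_mul,
    integral_sub_right_eq_self (fun x => Real.exp (-((1-2*s*a^2)/2)*x^2)) (2*s*a*b/(1-2*s*a^2)),
    integral_gaussian ((1-2*s*a^2)/2)]
  have h2π : (0:ℝ) < 2*π := by positivity
  have hπd : π / ((1-2*s*a^2)/2) = (2*π)/(1-2*s*a^2) := by field_simp
  rw [hπd, Real.sqrt_div h2π.le]
  have hs2π : Real.sqrt (2*π) ≠ 0 := by positivity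
  field_simp


lemma gauss_int_integrable (s a b : ℝ) (h : 2*s*a^2 < 1) :
    Integrable (fun x : ℝ => gaussianPDFReal 0 1 x * Real.exp (s*(a*x+b)^2)) := by
  have hcpos : (0:ℝ) < 1-2*s*a^2 := by linarith
  have key : ∀ x : ℝ, gaussianPDFReal 0 1 x * Real.exp (s*(a*x+b)^2)
      = ((Real.sqrt (2*π))⁻¹ * Real.exp (s*b^2/(1-2*s*a^2)))
        * Real.exp (-((1-2*s*a^2)/2)*(x-2*s*a*b/(1-2*s*a^2))^2) := by
    intro x
    rw [gaussianPDFReal]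
    push_cast
    rw [mul_one, mul_assoc, ← Real.exp_add, mul_assoc, ← Real.exp_add]
    congr 2
    field_simp
    ring
  simp_rw [key]
  exact ((integrable_exp_neg_mul_sq (by linarith : (0:ℝ) < (1-2*s*a^2)/2)).comp_sub_right
    (2*s*a*b/(1-2*s*a^2))).const_mul _


lemma gauss_lint (s a b : ℝ) (h : 2*s*a^2 < 1) :
    ∫⁻ x, ENNReal.ofReal (Real.exp (s*(a*x+b)^2)) ∂(gaussianReal 0 1)
      = ENNReal.ofReal ((Real.sqrt (1-2*s*a^2))⁻¹ * Real.exp (s*b^2/(1-2*s*a^2))) := by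
  rw [gaussianReal_of_var_ne_zero 0 one_ne_zero,
    lintegral_withDensity_eq_lintegral_mul _ (measurable_gaussianPDF 0 1)
      (by fun_prop)]
  have : ∀ x : ℝ, gaussianPDF 0 1 x * ENNReal.ofReal (Real.exp (s*(a*x+b)^2))
      = ENNReal.ofReal (gaussianPDFReal 0 1 x * Real.exp (s*(a*x+b)^2)) := by
    intro x
    rw [gaussianPDF, ENNReal.ofReal_mul (gaussianPDFReal_nonneg 0 1 x)]
  simp_rw [Pi.mul_apply, this]
  rw [← ofReal_integral_eq_lintegral_ofReal (gauss_int_integrable s a b h)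
    (Filter.Eventually.of_forall fun x => mul_nonneg (gaussianPDFReal_nonneg 0 1 x) (Real.exp_nonneg _)),
    gauss_int_real s a b h]


lemma meas_ofReal_exp {α : Type*} [MeasurableSpace α] {f : α → ℝ} (hf : Measurable f) :
    Measurable fun a => ENNReal.ofReal (Real.exp (f a)) :=
  (Real.measurable_exp.comp hf).ennreal_ofReal


lemma gauss_lint_pi : ∀ (n : ℕ) (s : ℝ) (v : Fin n → ℝ) (b : ℝ),
    2*s*(∑ j, (v j)^2) < 1 →
    ∫⁻ x, ENNReal.ofReal (Real.exp (s*(∑ j, v j * x j + b)^2))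
        ∂(Measure.pi fun _ : Fin n => gaussianReal 0 1)
      = ENNReal.ofReal ((Real.sqrt (1-2*s*(∑ j, (v j)^2)))⁻¹
          * Real.exp (s*b^2/(1-2*s*(∑ j, (v j)^2)))) := by
  intro n
  induction n with
  | zero =>
      intro s v b h
      simp [lintegral_const]
  | succ m ih =>
      intro s v b h
      -- basic positivity facts
      have hsum : ∑ j : Fin (m+1), (v j)^2 = (v 0)^2 + ∑ j : Fin m, (v j.succ)^2 :=
        Fin.sum_univ_succ _
      have hS'nn : (0:ℝ) ≤ ∑ j : Fin m, (v j.succ)^2 :=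
        Finset.sum_nonneg fun _ _ => sq_nonneg _
      have hSnn : (0:ℝ) ≤ ∑ j : Fin (m+1), (v j)^2 :=
        Finset.sum_nonneg fun _ _ => sq_nonneg _
      have hih : 2*s*(∑ j : Fin m, (v j.succ)^2) < 1 := by
        rcases le_or_gt s 0 with hs | hs
        · nlinarith
        · nlinarith [sq_nonneg (v 0)]
      have hc' : (0:ℝ) < 1 - 2*s*(∑ j : Fin m, (v j.succ)^2) := by linarith
      have hc : (0:ℝ) < 1 - 2*s*(∑ j : Fin (m+1), (v j)^2) := by linarith
      set S' : ℝ := ∑ j : Fin m, (v j.succ)^2 with hS'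
      set S : ℝ := ∑ j : Fin (m+1), (v j)^2 with hSdef
      have hs0 : 2*(s/(1-2*s*S'))*(v 0)^2 < 1 := by
        have h1 : 2*(s/(1-2*s*S'))*(v 0)^2 = (2*s*(v 0)^2)/(1-2*s*S') := by ring
        have h2 : 2*s*S = 2*s*(v 0)^2 + 2*s*S' := by rw [hsum]; ring
        rw [h1, div_lt_one hc']
        linarith
      -- Fubini step
      have hmp := (measurePreserving_piFinSuccAbove
        (fun _ : Fin (m+1) => gaussianReal 0 1) 0).symm
      rw [← hmp.lintegral_comp_emb (MeasurableEquiv.measurableEmbedding _)]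
      simp_rw [MeasurableEquiv.piFinSuccAbove_symm_apply, Fin.insertNthEquiv,
        Equiv.coe_fn_mk, Fin.insertNth_zero', Fin.sum_univ_succ, Fin.cons_zero, Fin.cons_succ]
      have h1 : Measurable fun z : ℝ × (Fin m → ℝ) =>
          v 0 * z.1 + ∑ j : Fin m, v j.succ * z.2 j + b :=
        ((measurable_fst.const_mul (v 0)).add
          (Finset.measurable_sum Finset.univ fun j _ =>
            (by fun_prop : Measurable fun z : ℝ × (Fin m → ℝ) => v j.succ * z.2 j))).add
          measurable_const
      rw [lintegral_prod _ (meas_ofReal_exp ((h1.pow_const 2).const_mul s)).aemeasurable]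
      have inner_eq : ∀ a : ℝ,
          ∫⁻ y, ENNReal.ofReal
              (Real.exp (s*(v 0 * a + ∑ j : Fin m, v j.succ * y j + b)^2))
            ∂(Measure.pi fun _ : Fin m => gaussianReal 0 1)
          = ENNReal.ofReal ((Real.sqrt (1-2*s*S'))⁻¹)
            * ENNReal.ofReal (Real.exp ((s/(1-2*s*S'))*(v 0 * a + b)^2)) := by
        intro a
        have : ∀ y : Fin m → ℝ, s*(v 0 * a + ∑ j : Fin m, v j.succ * y j + b)^2
            = s*(∑ j : Fin m, v j.succ * y j + (v 0 * a + b))^2 := by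
          intro y; ring
        simp_rw [this]
        rw [ih s (fun j => v j.succ) (v 0 * a + b) hih, ← ENNReal.ofReal_mul (by positivity)]
        congr 2
        simp only [← hS']
        ring
      simp_rw [inner_eq]
      have h2 : Measurable fun a : ℝ => v 0 * a + b :=
        (measurable_id.const_mul (v 0)).add measurable_const
      rw [lintegral_const_mul _ (meas_ofReal_exp ((h2.pow_const 2).const_mul (s/(1-2*s*S'))))]
      rw [gauss_lint (s/(1-2*s*S')) (v 0) b hs0, ← ENNReal.ofReal_mul (by positivity)]
      congr 1
      have hq : 1 - 2*(s/(1-2*s*S'))*(v 0)^2 = (1-2*s*S)/(1-2*s*S') := by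
        rw [hsum]
        field_simp
        ring
      rw [hq]
      have hsqrt : Real.sqrt ((1-2*s*S)/(1-2*s*S'))
          = Real.sqrt (1-2*s*S) / Real.sqrt (1-2*s*S') := Real.sqrt_div hc.le _
      rw [hsqrt]
      have h1 : Real.sqrt (1-2*s*S') ≠ 0 := by positivity
      have h2 : Real.sqrt (1-2*s*S) ≠ 0 := by positivity
      have hexp : (s/(1-2*s*S'))*b^2/((1-2*s*S)/(1-2*s*S')) = s*b^2/(1-2*s*S) := by
        field_simp
        rw [mul_comm s, mul_assoc, mul_div_mul_left _ _ (by linarith : (1 - s*2*S') ≠ 0)]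
      rw [hexp]
      field_simp


lemma lintegral_pi_pow {α : Type*} [MeasurableSpace α] (μ : Measure α) [IsProbabilityMeasure μ] :
    ∀ (m : ℕ) (g : α → ℝ≥0∞), Measurable g →
    ∫⁻ x, ∏ i : Fin m, g (x i) ∂(Measure.pi fun _ : Fin m => μ) = (∫⁻ a, g a ∂μ) ^ m := by
  intro m
  induction m with
  | zero => intro g hg; simp
  | succ m ih =>
      intro g hg
      have hmp := (measurePreserving_piFinSuccAbove (fun _ : Fin (m+1) => μ) 0).symm
      rw [← hmp.lintegral_comp_emb (MeasurableEquiv.measurableEmbedding _)]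
      simp_rw [MeasurableEquiv.piFinSuccAbove_symm_apply, Fin.insertNthEquiv,
        Equiv.coe_fn_mk, Fin.insertNth_zero', Fin.prod_univ_succ, Fin.cons_zero, Fin.cons_succ]
      rw [lintegral_prod_mul (f := g) (g := fun y : Fin m → α => ∏ i, g (y i))
        hg.aemeasurable
        (Finset.measurable_prod Finset.univ fun j _ =>
          hg.comp (measurable_pi_apply j)).aemeasurable]
      rw [ih g hg, pow_succ, mul_comm]


instance gaussMatrix_prob (d n : ℕ) : IsProbabilityMeasure (gaussMatrix d n) := by
  rw [gaussMatrix]; infer_instance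

lemma Xq_measurable {d n : ℕ} (v : Fin n → ℝ) :
    Measurable (fun A : Fin d → Fin n → ℝ => ∑ i, (∑ j, v j * A i j)^2) :=
  Finset.measurable_sum _ fun i _ =>
    (Finset.measurable_sum _ fun j _ =>
      (by fun_prop : Measurable fun A : Fin d → Fin n → ℝ => v j * A i j)).pow_const 2


lemma mgf_lint (d n : ℕ) (s : ℝ) (v : Fin n → ℝ) (h : 2*s*(∑ j, (v j)^2) < 1) :
    ∫⁻ A, ENNReal.ofReal (Real.exp (s * ∑ i, (∑ j, v j * A i j)^2)) ∂gaussMatrix d n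
      = ENNReal.ofReal (((Real.sqrt (1-2*s*(∑ j, (v j)^2)))⁻¹)^d) := by
  have hin : ∀ x : Fin n → ℝ, s*(∑ j, v j * x j + 0)^2 = s*(∑ j, v j * x j)^2 := by
    intro x; ring
  have hbase := gauss_lint_pi n s v 0 h
  simp_rw [hin] at hbase
  simp only [zero_pow, mul_zero, zero_div, Real.exp_zero, mul_one, ne_eq, OfNat.ofNat_ne_zero,
    not_false_eq_true] at hbase
  have hexpand : ∀ A : Fin d → Fin n → ℝ,
      ENNReal.ofReal (Real.exp (s * ∑ i, (∑ j, v j * A i j)^2))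
      = ∏ i : Fin d, ENNReal.ofReal (Real.exp (s * (∑ j, v j * A i j)^2)) := by
    intro A
    rw [Finset.mul_sum, Real.exp_sum, ENNReal.ofReal_prod_of_nonneg]
    intro i _
    exact Real.exp_nonneg _
  simp_rw [hexpand]
  rw [gaussMatrix, lintegral_pi_pow _ d
    (fun y : Fin n → ℝ => ENNReal.ofReal (Real.exp (s * (∑ j, v j * y j)^2)))
    (meas_ofReal_exp (by fun_prop)), hbase,
    ← ENNReal.ofReal_pow (by positivity)]


lemma chernoff_upper {Ω : Type*} [MeasurableSpace Ω] (μ : Measure Ω) {X : Ω → ℝ}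
    (hX : Measurable X) (s t : ℝ) (hs : 0 ≤ s) :
    μ {ω | t < X ω} ≤ ENNReal.ofReal (Real.exp (-(s*t)))
      * ∫⁻ ω, ENNReal.ofReal (Real.exp (s * X ω)) ∂μ := by
  have hset : MeasurableSet {ω | t < X ω} := measurableSet_lt measurable_const hX
  calc μ {ω | t < X ω} = ∫⁻ ω in {ω | t < X ω}, 1 ∂μ := (setLIntegral_one _).symm
    _ ≤ ∫⁻ ω in {ω | t < X ω}, ENNReal.ofReal (Real.exp (-(s*t)) * Real.exp (s * X ω)) ∂μ := by
        refine setLIntegral_mono (by fun_prop) ?_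
        intro ω hω
        simp only [Set.mem_setOf_eq] at hω
        rw [← Real.exp_add]
        rw [show (1 : ℝ≥0∞) = ENNReal.ofReal 1 by simp]
        exact ENNReal.ofReal_le_ofReal (Real.one_le_exp (by nlinarith [hω.le]))
    _ ≤ ∫⁻ ω, ENNReal.ofReal (Real.exp (-(s*t)) * Real.exp (s * X ω)) ∂μ :=
        setLIntegral_le_lintegral _ _
    _ = _ := by
        simp_rw [ENNReal.ofReal_mul (Real.exp_nonneg _)]
        exact lintegral_const_mul _ (meas_ofReal_exp (hX.const_mul s))


lemma chernoff_lower {Ω : Type*} [MeasurableSpace Ω] (μ : Measure Ω) {X : Ω → ℝ}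
    (hX : Measurable X) (s t : ℝ) (hs : 0 ≤ s) :
    μ {ω | X ω < t} ≤ ENNReal.ofReal (Real.exp (s*t))
      * ∫⁻ ω, ENNReal.ofReal (Real.exp ((-s) * X ω)) ∂μ := by
  have hset : MeasurableSet {ω | X ω < t} := measurableSet_lt hX measurable_const
  calc μ {ω | X ω < t} = ∫⁻ ω in {ω | X ω < t}, 1 ∂μ := (setLIntegral_one _).symm
    _ ≤ ∫⁻ ω in {ω | X ω < t}, ENNReal.ofReal (Real.exp (s*t) * Real.exp ((-s) * X ω)) ∂μ := by
        refine setLIntegral_mono (by fun_prop) ?_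
        intro ω hω
        simp only [Set.mem_setOf_eq] at hω
        rw [← Real.exp_add]
        rw [show (1 : ℝ≥0∞) = ENNReal.ofReal 1 by simp]
        exact ENNReal.ofReal_le_ofReal (Real.one_le_exp (by nlinarith [hω.le]))
    _ ≤ ∫⁻ ω, ENNReal.ofReal (Real.exp (s*t) * Real.exp ((-s) * X ω)) ∂μ :=
        setLIntegral_le_lintegral _ _
    _ = _ := by
        simp_rw [ENNReal.ofReal_mul (Real.exp_nonneg _)]
        exact lintegral_const_mul _ (meas_ofReal_exp (hX.const_mul (-s)))


lemma tail_upper (d n : ℕ) (v : Fin n → ℝ) (δ τ₁ : ℝ) (hδ : 0 < δ) (hτ₁ : 0 < τ₁)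
    (hv : ∑ j, (v j)^2 ≤ δ^2) :
    gaussMatrix d n {A | (1+τ₁)*(d:ℝ)*δ^2 < ∑ i, (∑ j, v j * A i j)^2}
      ≤ ENNReal.ofReal (Real.exp (-((d:ℝ)/2)*(τ₁ - Real.log (1+τ₁)))) := by
  set S := ∑ j, (v j)^2 with hS
  have hSnn : 0 ≤ S := Finset.sum_nonneg fun _ _ => sq_nonneg _
  have hδ2 : 0 < δ^2 := by positivity
  have h1τ : (0:ℝ) < 1+τ₁ := by linarith
  set s := τ₁/(2*(1+τ₁)*δ^2) with hs_def
  have hs : 0 < s := by positivity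
  have h2sS : 2*s*S ≤ τ₁/(1+τ₁) := by
    have e1 : 2*s*S = τ₁*S/((1+τ₁)*δ^2) := by rw [hs_def]; field_simp
    rw [e1, div_le_div_iff₀ (by positivity) h1τ]
    nlinarith [mul_le_mul_of_nonneg_left hv (le_of_lt (mul_pos hτ₁ h1τ))]
  have hcond : 2*s*S < 1 := lt_of_le_of_lt h2sS (by rw [div_lt_one h1τ]; linarith)
  have hcpos : (0:ℝ) < 1-2*s*S := by linarith
  have key := chernoff_upper (gaussMatrix d n) (Xq_measurable v) s ((1+τ₁)*(d:ℝ)*δ^2) hs.le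
  rw [mgf_lint d n s v hcond, ← ENNReal.ofReal_mul (Real.exp_nonneg _)] at key
  refine key.trans (ENNReal.ofReal_le_ofReal ?_)
  have hst : s*((1+τ₁)*(d:ℝ)*δ^2) = τ₁*(d:ℝ)/2 := by rw [hs_def]; field_simp
  have hrle : (Real.sqrt (1-2*s*S))⁻¹ ≤ Real.sqrt (1+τ₁) := by
    have heq : (1:ℝ) - τ₁/(1+τ₁) = 1/(1+τ₁) := by field_simp; ring
    have h1 : (1:ℝ)/(1+τ₁) ≤ 1-2*s*S := by linarith
    calc (Real.sqrt (1-2*s*S))⁻¹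
        ≤ (Real.sqrt (1/(1+τ₁)))⁻¹ :=
          inv_anti₀ (Real.sqrt_pos.mpr (by positivity)) (Real.sqrt_le_sqrt h1)
      _ = Real.sqrt (1+τ₁) := by rw [one_div, Real.sqrt_inv, inv_inv]
  have hrd : ((Real.sqrt (1-2*s*S))⁻¹)^d ≤ Real.exp ((d:ℝ)*(Real.log (1+τ₁)/2)) := by
    refine (pow_le_pow_left₀ (by positivity) hrle d).trans_eq ?_
    rw [show Real.sqrt (1+τ₁) = Real.exp (Real.log (1+τ₁)/2) by
      rw [← Real.log_sqrt h1τ.le, Real.exp_log (Real.sqrt_pos.mpr h1τ)],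
      ← Real.exp_nat_mul]
  rw [hst]
  calc Real.exp (-(τ₁*(d:ℝ)/2)) * ((Real.sqrt (1-2*s*S))⁻¹)^d
      ≤ Real.exp (-(τ₁*(d:ℝ)/2)) * Real.exp ((d:ℝ)*(Real.log (1+τ₁)/2)) :=
        mul_le_mul_of_nonneg_left hrd (Real.exp_nonneg _)
    _ = Real.exp (-((d:ℝ)/2)*(τ₁ - Real.log (1+τ₁))) := by
        rw [← Real.exp_add]; congr 1; ring


lemma tail_lower (d n : ℕ) (v : Fin n → ℝ) (τ₂ : ℝ) (h0 : 0 < τ₂) (h1 : τ₂ < 1) :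
    gaussMatrix d n {A | ∑ i, (∑ j, v j * A i j)^2 < (1-τ₂)*(d:ℝ)*(∑ j, (v j)^2)}
      ≤ ENNReal.ofReal (Real.exp (((d:ℝ)/2)*(τ₂ + Real.log (1-τ₂)))) := by
  set S := ∑ j, (v j)^2 with hS
  have hSnn : 0 ≤ S := Finset.sum_nonneg fun _ _ => sq_nonneg _
  have hτ : (0:ℝ) < 1-τ₂ := by linarith
  rcases eq_or_lt_of_le hSnn with hS0 | hSpos
  · have hsub : {A : Fin d → Fin n → ℝ | ∑ i, (∑ j, v j * A i j)^2 < (1-τ₂)*(d:ℝ)*S}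
        ⊆ (∅ : Set (Fin d → Fin n → ℝ)) := by
      intro A hA
      simp only [Set.mem_setOf_eq, ← hS0, mul_zero] at hA
      exact absurd hA (not_lt.mpr (Finset.sum_nonneg fun _ _ => sq_nonneg _))
    exact le_trans (measure_mono hsub) (by simp)
  · set s := τ₂/(2*(1-τ₂)*S) with hs_def
    have hs : 0 < s := by positivity
    have hcond : 2*(-s)*S < 1 := by nlinarith
    have key := chernoff_lower (gaussMatrix d n) (Xq_measurable v) s ((1-τ₂)*(d:ℝ)*S) hs.le
    rw [mgf_lint d n (-s) v hcond, ← ENNReal.ofReal_mul (Real.exp_nonneg _)] at key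
    refine key.trans (ENNReal.ofReal_le_ofReal ?_)
    have hst : s*((1-τ₂)*(d:ℝ)*S) = τ₂*(d:ℝ)/2 := by rw [hs_def]; field_simp
    have he : 1-2*(-s)*S = (1-τ₂)⁻¹ := by rw [hs_def]; field_simp; ring
    rw [hst, he, Real.sqrt_inv, inv_inv]
    rw [show Real.sqrt (1-τ₂) = Real.exp (Real.log (1-τ₂)/2) by
      rw [← Real.log_sqrt hτ.le, Real.exp_log (Real.sqrt_pos.mpr hτ)],
      ← Real.exp_nat_mul, ← Real.exp_add]
    exact le_of_eq (by congr 1; ring)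


/-- Theorem 1 (CSP, noiseless individual recovery). -/
theorem csp_noiseless_individual
    (n d r : ℕ) (hd : 1 ≤ d)
    (δ : ℝ) (hδ : 0 < δ) (x_o : Fin n → ℝ)
    (C : Finset (Fin n → ℝ)) (hCne : C.Nonempty) (hCcard : C.card ≤ 2 ^ r)
    (xtil : Fin n → ℝ) (hxtil : xtil ∈ C) (hdist : norm2 (x_o - xtil) ≤ δ)
    (τ₁ τ₂ : ℝ) (hτ₁ : 0 < τ₁) (hτ₂ : τ₂ ∈ Set.Ioo (0 : ℝ) 1) :
    1 - 2 ^ r * Real.exp (((d : ℝ) / 2) * (τ₂ + Real.log (1 - τ₂)))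
        - Real.exp (-((d : ℝ) / 2) * (τ₁ - Real.log (1 + τ₁)))
      ≤ (gaussMatrix d n {A | ∀ xhat, IsCSPEstimate C A (mulVec' A x_o) xhat →
          norm2 (xhat - x_o) ≤ δ * Real.sqrt ((1 + τ₁) / (1 - τ₂))}).toReal := by
  obtain ⟨hτ₂0, hτ₂1⟩ := hτ₂
  have hτ₂1' : (0:ℝ) < 1 - τ₂ := by linarith
  have hdpos : (0:ℝ) < (d:ℝ) := by exact_mod_cast Nat.lt_of_lt_of_le Nat.zero_lt_one hd
  set μ := gaussMatrix d n with hμ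
  set elow := Real.exp (((d : ℝ) / 2) * (τ₂ + Real.log (1 - τ₂))) with helow
  set eup := Real.exp (-((d : ℝ) / 2) * (τ₁ - Real.log (1 + τ₁))) with heup
  set Good := {A : Fin d → Fin n → ℝ | ∀ xhat, IsCSPEstimate C A (mulVec' A x_o) xhat →
          norm2 (xhat - x_o) ≤ δ * Real.sqrt ((1 + τ₁) / (1 - τ₂))} with hGood
  set Bup := {A : Fin d → Fin n → ℝ |
      (1+τ₁)*(d:ℝ)*δ^2 < ∑ i, (∑ j, (x_o - xtil) j * A i j)^2} with hBup
  set Blow := fun c : Fin n → ℝ => {A : Fin d → Fin n → ℝ |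
      ∑ i, (∑ j, (x_o - c) j * A i j)^2 < (1-τ₂)*(d:ℝ)*(∑ j, ((x_o - c) j)^2)} with hBlow
  set Bad := Bup ∪ ⋃ c ∈ C, Blow c with hBad
  -- norm2-square facts
  have hsq : ∀ {m : ℕ} (u : Fin m → ℝ), norm2 u ^ 2 = ∑ i, (u i)^2 := by
    intro m u
    exact Real.sq_sqrt (Finset.sum_nonneg fun _ _ => sq_nonneg _)
  have hsq_le : ∀ (u w : Fin d → ℝ), norm2 u ≤ norm2 w → ∑ i, (u i)^2 ≤ ∑ i, (w i)^2 := by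
    intro u w h
    rw [← hsq u, ← hsq w]
    exact pow_le_pow_left₀ (Real.sqrt_nonneg _) h 2
  -- residual identity
  have hres : ∀ (A : Fin d → Fin n → ℝ) (c : Fin n → ℝ),
      ∑ i, ((mulVec' A x_o - mulVec' A c) i)^2 = ∑ i, (∑ j, (x_o - c) j * A i j)^2 := by
    intro A c
    refine Finset.sum_congr rfl fun i _ => ?_
    congr 1
    rw [Pi.sub_apply]
    simp only [mulVec']
    rw [← Finset.sum_sub_distrib]
    exact Finset.sum_congr rfl fun j _ => by rw [Pi.sub_apply]; ring
  -- the deterministic implication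
  have hsubset : Badᶜ ⊆ Good := by
    intro A hA
    simp only [hBad, Set.compl_union, Set.mem_inter_iff, Set.mem_compl_iff, Set.mem_setOf_eq,
      Set.mem_iUnion, not_exists] at hA
    obtain ⟨hA1, hA2⟩ := hA
    intro xhat ⟨hxhatC, hmin⟩
    have hA2' : ¬ (A ∈ Blow xhat) := hA2 xhat hxhatC
    simp only [hBlow, Set.mem_setOf_eq, not_lt] at hA2'
    -- chain of inequalities
    have h1 : ∑ i, (∑ j, (x_o - xhat) j * A i j)^2 ≤ (1+τ₁)*(d:ℝ)*δ^2 := by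
      have := hsq_le _ _ (hmin xtil hxtil)
      rw [hres A xhat, hres A xtil] at this
      exact this.trans (not_lt.mp hA1)
    have hSx : ∑ j, ((x_o - xhat) j)^2 ≤ δ^2 * ((1+τ₁)/(1-τ₂)) := by
      have h2 := hA2'.trans h1
      have h3 : (1-τ₂) * (∑ j, ((x_o - xhat) j)^2) ≤ (1+τ₁) * δ^2 := by nlinarith [h2]
      rw [mul_comm (δ^2), div_mul_eq_mul_div, le_div_iff₀ hτ₂1']
      nlinarith [h3]
    have hflip : ∑ j, ((xhat - x_o) j)^2 = ∑ j, ((x_o - xhat) j)^2 :=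
      Finset.sum_congr rfl fun j _ => by rw [Pi.sub_apply, Pi.sub_apply]; ring
    calc norm2 (xhat - x_o) = Real.sqrt (∑ j, ((x_o - xhat) j)^2) := by rw [norm2, hflip]
      _ ≤ Real.sqrt (δ^2 * ((1+τ₁)/(1-τ₂))) := Real.sqrt_le_sqrt hSx
      _ = δ * Real.sqrt ((1+τ₁)/(1-τ₂)) := by
          rw [Real.sqrt_mul (sq_nonneg δ), Real.sqrt_sq hδ.le]
  -- measurability
  have hBupM : MeasurableSet Bup := measurableSet_lt measurable_const (Xq_measurable _)
  have hBlowM : ∀ c, MeasurableSet (Blow c) :=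
    fun c => measurableSet_lt (Xq_measurable _) measurable_const
  have hBadM : MeasurableSet Bad :=
    hBupM.union (Set.Finite.measurableSet_biUnion C.finite_toSet fun c _ => hBlowM c)
  -- probability bound on Bad
  have hvtil : ∑ j, ((x_o - xtil) j)^2 ≤ δ^2 := by
    rw [← hsq (x_o - xtil)]
    exact pow_le_pow_left₀ (Real.sqrt_nonneg _) hdist 2
  have hBadBound : μ Bad ≤ ENNReal.ofReal eup + (C.card : ℝ≥0∞) * ENNReal.ofReal elow := by
    refine (measure_union_le _ _).trans (add_le_add ?_ ?_)
    · exact tail_upper d n (x_o - xtil) δ τ₁ hδ hτ₁ hvtil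
    · refine (measure_biUnion_finset_le C Blow).trans ?_
      calc ∑ c ∈ C, μ (Blow c) ≤ ∑ _c ∈ C, ENNReal.ofReal elow :=
            Finset.sum_le_sum fun c _ => tail_lower d n (x_o - c) τ₂ hτ₂0 hτ₂1
        _ = (C.card : ℝ≥0∞) * ENNReal.ofReal elow := by
            rw [Finset.sum_const, nsmul_eq_mul]
  -- assemble
  have hBadReal : (μ Bad).toReal ≤ eup + 2^r * elow := by
    have hne : ENNReal.ofReal eup + (C.card : ℝ≥0∞) * ENNReal.ofReal elow ≠ ⊤ := by
      finiteness
    refine (ENNReal.toReal_mono hne hBadBound).trans ?_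
    rw [ENNReal.toReal_add (by finiteness) (by finiteness), ENNReal.toReal_mul,
      ENNReal.toReal_ofReal (Real.exp_nonneg _), ENNReal.toReal_ofReal (Real.exp_nonneg _),
      ENNReal.toReal_natCast]
    have hcard : (C.card : ℝ) ≤ 2^r := by exact_mod_cast hCcard
    nlinarith [Real.exp_nonneg (((d : ℝ) / 2) * (τ₂ + Real.log (1 - τ₂)))]
  have hcompl : (μ Badᶜ).toReal = 1 - (μ Bad).toReal := by
    rw [prob_compl_eq_one_sub hBadM, ENNReal.toReal_sub_of_le prob_le_one ENNReal.one_ne_top,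
      ENNReal.toReal_one]
  have hmono : (μ Badᶜ).toReal ≤ (μ Good).toReal :=
    ENNReal.toReal_mono (measure_ne_top μ Good) (measure_mono hsubset)
  rw [hGood] at hmono
  linarith [hcompl ▸ hmono, hBadReal]
end

section
/- Theorem 2 (CSP, individual recovery under deterministic noise). Fix τ1 > 0, τ2 ∈ (0,1) and ζ ≥ 0. Then with P-probability at least 1 − 2^r·exp((d/2)(τ2 + log(1−τ2))) − exp(−(d/2)(τ1 − log(1+τ1))), the matrix A has the following property: for every noise vector z ∈ ℝ^d with ‖z‖₂ ≤ ζ, every CSP estimate x̂ computed from the noisy measurements y = A x_o + z satisfies ‖x̂ − x_o‖₂ ≤ δ·√((1+τ1)/(1−τ2)) + 2ζ/√((1−τ2)·d). -/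
open MeasureTheory ProbabilityTheory

section Aux

open Real
open scoped ENNReal NNReal

instance (d n : ℕ) : IsProbabilityMeasure (gaussMatrix d n) := by
  unfold gaussMatrix; infer_instance

noncomputable def gaussPi (n : ℕ) : Measure (Fin n → ℝ) := Measure.pi fun _ => gaussianReal 0 1

instance (n : ℕ) : IsProbabilityMeasure (gaussPi n) := by
  unfold gaussPi; infer_instance

lemma integral_gaussianReal_f (f : ℝ → ℝ) :
    ∫ x, f x ∂(gaussianReal 0 1) = ∫ x, gaussianPDFReal 0 1 x * f x := by
  rw [gaussianReal_of_var_ne_zero _ one_ne_zero]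
  have : (gaussianPDF 0 1) = fun x => ((Real.toNNReal (gaussianPDFReal 0 1 x) : ℝ≥0) : ℝ≥0∞) := by
    ext x; rfl
  rw [this, integral_withDensity_eq_integral_smul
    ((measurable_gaussianPDFReal 0 1).real_toNNReal)]
  congr 1 with x
  simp [NNReal.smul_def, Real.coe_toNNReal _ (gaussianPDFReal_nonneg 0 1 x)]

lemma integrable_gaussianReal_iff (f : ℝ → ℝ) :
    Integrable f (gaussianReal 0 1) ↔ Integrable (fun x => gaussianPDFReal 0 1 x * f x) := by
  rw [gaussianReal_of_var_ne_zero _ one_ne_zero]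
  have : (gaussianPDF 0 1) = fun x => ((Real.toNNReal (gaussianPDFReal 0 1 x) : ℝ≥0) : ℝ≥0∞) := by
    ext x; rfl
  rw [this, integrable_withDensity_iff_integrable_smul
    ((measurable_gaussianPDFReal 0 1).real_toNNReal)]
  constructor <;> intro h <;> [skip; skip] <;>
  · refine h.congr (Filter.Eventually.of_forall fun x => ?_)
    simp [NNReal.smul_def, Real.coe_toNNReal _ (gaussianPDFReal_nonneg 0 1 x)]

lemma gauss_one_dim (c a t : ℝ) (h : 2*c*t^2 < 1) :
    Integrable (fun x => Real.exp (c*(a+t*x)^2)) (gaussianReal 0 1) ∧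
    ∫ x, Real.exp (c*(a+t*x)^2) ∂(gaussianReal 0 1)
      = (Real.sqrt (1-2*c*t^2))⁻¹ * Real.exp (c*a^2/(1-2*c*t^2)) := by
  set α : ℝ := 1/2 - c*t^2 with hα
  have hα0 : 0 < α := by simp only [hα]; linarith
  set β : ℝ := c*a*t/α with hβ
  set γ : ℝ := c*a^2/(1-2*c*t^2) with hγ
  have hK : (1 : ℝ) - 2*c*t^2 = 2*α := by simp only [hα]; ring
  have key : ∀ x : ℝ, gaussianPDFReal 0 1 x * Real.exp (c*(a+t*x)^2)
      = (Real.sqrt (2*π))⁻¹ * Real.exp γ * Real.exp (-α * (x - β)^2) := by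
    intro x
    have hα' : α ≠ 0 := ne_of_gt hα0
    have e1 : Real.exp (-x^2/2) * Real.exp (c*(a+t*x)^2) = Real.exp γ * Real.exp (-α*(x-β)^2) := by
      rw [← Real.exp_add, ← Real.exp_add]
      congr 1
      rw [hγ, hK, hβ]
      field_simp
      ring
    simp only [gaussianPDFReal, NNReal.coe_one, mul_one, sub_zero]
    linear_combination (Real.sqrt (2*π))⁻¹ * e1
  have hint : Integrable (fun x => (Real.sqrt (2*π))⁻¹ * Real.exp γ * Real.exp (-α * (x-β)^2)) := by
    exact ((integrable_exp_neg_mul_sq hα0).comp_sub_right β).const_mul _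
  constructor
  · rw [integrable_gaussianReal_iff]
    exact hint.congr (Filter.Eventually.of_forall (fun x => (key x).symm))
  · rw [integral_gaussianReal_f]
    calc ∫ x, gaussianPDFReal 0 1 x * Real.exp (c*(a+t*x)^2)
        = ∫ x, (Real.sqrt (2*π))⁻¹ * Real.exp γ * Real.exp (-α * (x-β)^2) := by
          exact integral_congr_ae (Filter.Eventually.of_forall key)
      _ = (Real.sqrt (2*π))⁻¹ * Real.exp γ * ∫ x, Real.exp (-α * (x-β)^2) := by
          rw [integral_const_mul]
      _ = (Real.sqrt (2*π))⁻¹ * Real.exp γ * Real.sqrt (π/α) := by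
          rw [integral_sub_right_eq_self (fun x => Real.exp (-α * x^2)) β, integral_gaussian]
      _ = (Real.sqrt (1-2*c*t^2))⁻¹ * Real.exp γ := by
          rw [hK]
          rw [show (Real.sqrt (2*π))⁻¹ * Real.exp γ * Real.sqrt (π/α)
            = Real.sqrt (π/α) / Real.sqrt (2*π) * Real.exp γ by ring]
          rw [← Real.sqrt_div' _ (by positivity), show π/α/(2*π) = (2*α)⁻¹ by field_simp,
            Real.sqrt_inv]

lemma gauss_pi_dim (n : ℕ) (c : ℝ) (v : Fin n → ℝ) (a : ℝ) (h : 2*c*(∑ j, v j^2) < 1) :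
    Integrable (fun x : Fin n → ℝ => Real.exp (c*(a + ∑ j, v j * x j)^2)) (gaussPi n) ∧
    ∫ x, Real.exp (c*(a + ∑ j, v j * x j)^2) ∂(gaussPi n)
      = (Real.sqrt (1-2*c*(∑ j, v j^2)))⁻¹ * Real.exp (c*a^2/(1-2*c*(∑ j, v j^2))) := by
  induction n generalizing a with
  | zero =>
      simp only [Finset.univ_eq_empty, Finset.sum_empty, mul_zero, sub_zero, add_zero] at *
      constructor
      · exact integrable_const _
      · simp [Real.sqrt_one]
  | succ n ih =>
      set S' : ℝ := ∑ j : Fin n, (v j.succ)^2 with hS'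
      have hS'0 : 0 ≤ S' := Finset.sum_nonneg fun _ _ => sq_nonneg _
      have hsum : (∑ j, v j ^ 2) = v 0 ^ 2 + S' := Fin.sum_univ_succ _
      have hS'lt : 2*c*S' < 1 := by
        rcases le_or_gt c 0 with hc | hc
        · nlinarith
        · nlinarith [sq_nonneg (v 0)]
      set K' : ℝ := 1 - 2*c*S' with hK'
      have hK'0 : 0 < K' := by simp only [hK']; linarith
      have hc1 : 2*(c/K')*(v 0)^2 < 1 := by
        have e0 : 2*(c/K')*(v 0)^2 = (2*c*(v 0)^2)/K' := by ring
        rw [e0, div_lt_one hK'0]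
        simp only [hK']; rw [hsum] at h; nlinarith
      -- measure preserving equivalence
      have mp := measurePreserving_piFinSuccAbove (fun _ : Fin (n+1) => gaussianReal 0 1) 0
      set e := MeasurableEquiv.piFinSuccAbove (fun _ : Fin (n+1) => ℝ) 0 with he
      -- the function on the product space
      set F : ℝ × (Fin n → ℝ) → ℝ :=
        fun p => Real.exp (c * ((a + v 0 * p.1) + ∑ j : Fin n, v j.succ * p.2 j)^2) with hF
      have hcomp : ∀ x : Fin (n+1) → ℝ,
          Real.exp (c*(a + ∑ j, v j * x j)^2) = F (e x) := by
        intro x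
        simp only [hF, he, MeasurableEquiv.piFinSuccAbove_apply]
        rw [Fin.sum_univ_succ]
        simp [Fin.zero_succAbove, Fin.tail]
        ring_nf
        exact Or.inl trivial
      -- inner results from ih
      have inner : ∀ y : ℝ,
          Integrable (fun x' : Fin n → ℝ => F (y, x')) (gaussPi n) ∧
          ∫ x', F (y, x') ∂(gaussPi n)
            = (Real.sqrt K')⁻¹ * Real.exp (c*(a + v 0 * y)^2/K') := by
        intro y
        exact ih (fun j => v j.succ) (a + v 0 * y) hS'lt
      -- outer integrand
      have outer := gauss_one_dim (c/K') a (v 0) hc1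
      have houter_eq : ∀ y : ℝ, (Real.sqrt K')⁻¹ * Real.exp (c*(a + v 0 * y)^2/K')
          = (Real.sqrt K')⁻¹ * Real.exp ((c/K')*(a + v 0 * y)^2) := by
        intro y; rw [div_mul_eq_mul_div, mul_div_assoc]
      -- measurability of F
      have hFmeas : Measurable F := by
        apply Measurable.exp
        apply Measurable.const_mul
        apply Measurable.pow_const
        exact ((measurable_const.add (measurable_fst.const_mul _)).add
          (Finset.measurable_sum _ fun j _ => (measurable_snd.eval.const_mul _)))
      have hFpos : ∀ p, 0 < F p := fun p => Real.exp_pos _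
      -- integrability of F on the product
      have hFint : Integrable F ((gaussianReal 0 1).prod (gaussPi n)) := by
        rw [integrable_prod_iff hFmeas.aestronglyMeasurable]
        constructor
        · exact Filter.Eventually.of_forall fun y => (inner y).1
        · apply Integrable.congr (outer.1.const_mul ((Real.sqrt K')⁻¹))
          refine Filter.Eventually.of_forall fun y => ?_
          show (Real.sqrt K')⁻¹ * Real.exp ((c/K')*(a + v 0 * y)^2)
            = ∫ x', ‖F (y, x')‖ ∂(gaussPi n)
          have hnn : (fun x' : Fin n → ℝ => ‖F (y, x')‖) = fun x' => F (y, x') :=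
            funext fun x' => norm_of_nonneg (hFpos _).le
          rw [hnn, (inner y).2, houter_eq y]
      -- now transfer
      have hint : Integrable (fun x : Fin (n+1) → ℝ => Real.exp (c*(a + ∑ j, v j * x j)^2))
          (gaussPi (n+1)) := by
        have h2 := (mp.integrable_comp_emb e.measurableEmbedding).mpr hFint
        exact h2.congr (Filter.Eventually.of_forall fun x => (hcomp x).symm)
      refine ⟨hint, ?_⟩
      -- compute the integral
      have hval : ∫ x, Real.exp (c*(a + ∑ j, v j * x j)^2) ∂(gaussPi (n+1))
          = ∫ p, F p ∂((gaussianReal 0 1).prod (gaussPi n)) := by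
        rw [show (fun x : Fin (n+1) → ℝ => Real.exp (c*(a + ∑ j, v j * x j)^2))
          = fun x => F (e x) from funext hcomp]
        exact mp.integral_comp' F
      rw [hval, integral_prod F hFint]
      have hin : (fun y => ∫ x', F (y, x') ∂(gaussPi n))
          = fun y => (Real.sqrt K')⁻¹ * Real.exp ((c/K')*(a + v 0 * y)^2) := by
        funext y; rw [(inner y).2, houter_eq y]
      rw [hin, integral_const_mul, outer.2]
      -- final algebra
      set K : ℝ := 1 - 2*c*(v 0^2 + S') with hKdef
      have hK0 : 0 < K := by rw [hsum] at h; simp only [hKdef]; linarith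
      have hq : 1 - 2*(c/K')*(v 0)^2 = K/K' := by
        simp only [hKdef]; field_simp; ring
      have hexp : (c/K')*a^2/(K/K') = c*a^2/K := by
        have h1 : K' ≠ 0 := ne_of_gt hK'0
        have h2 : K ≠ 0 := ne_of_gt hK0
        field_simp
      have hsqrt : (Real.sqrt K')⁻¹ * (Real.sqrt (K/K'))⁻¹ = (Real.sqrt K)⁻¹ := by
        rw [← mul_inv, ← Real.sqrt_mul hK'0.le, mul_div_cancel₀ _ (ne_of_gt hK'0)]
      rw [hq, hexp, ← mul_assoc, hsqrt, hsum, hKdef]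

lemma pi_prod_integral {E : Type*} [MeasurableSpace E] (ν : Measure E) [IsProbabilityMeasure ν]
    (d : ℕ) (g : E → ℝ) (hg : Integrable g ν) :
    Integrable (fun x : Fin d → E => ∏ i, g (x i)) (Measure.pi fun _ => ν) ∧
    ∫ x : Fin d → E, ∏ i, g (x i) ∂(Measure.pi fun _ => ν) = (∫ y, g y ∂ν) ^ d := by
  induction d with
  | zero =>
      constructor
      · simpa using integrable_const (1 : ℝ)
      · simp
  | succ d ih =>
      have mp := measurePreserving_piFinSuccAbove (fun _ : Fin (d+1) => ν) 0
      set e := MeasurableEquiv.piFinSuccAbove (fun _ : Fin (d+1) => E) 0 with he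
      have hcomp : ∀ x : Fin (d+1) → E, (∏ i, g (x i)) = g ((e x).1) * ∏ j, g ((e x).2 j) := by
        intro x
        rw [Fin.prod_univ_succ]
        simp [he, MeasurableEquiv.piFinSuccAbove_apply, Fin.zero_succAbove, Fin.tail]
      have hFint : Integrable (fun p : E × (Fin d → E) => g p.1 * ∏ j, g (p.2 j))
          (ν.prod (Measure.pi fun _ : Fin d => ν)) := hg.mul_prod ih.1
      constructor
      · have h2 := (mp.integrable_comp_emb e.measurableEmbedding).mpr hFint
        exact h2.congr (Filter.Eventually.of_forall fun x => (hcomp x).symm)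
      · rw [show (fun x : Fin (d+1) → E => ∏ i, g (x i))
          = fun x => g ((e x).1) * ∏ j, g ((e x).2 j) from funext hcomp]
        rw [mp.integral_comp' (fun p => g p.1 * ∏ j, g (p.2 j)),
          integral_prod_mul g (fun w : Fin d → E => ∏ j, g (w j)), ih.2, pow_succ]
        ring

lemma gauss_matrix_mgf (d n : ℕ) (c : ℝ) (v : Fin n → ℝ) (h : 2*c*(∑ j, v j^2) < 1) :
    Integrable (fun A : Fin d → Fin n → ℝ => Real.exp (c * ∑ i, (∑ j, A i j * v j)^2))
      (gaussMatrix d n) ∧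
    ∫ A, Real.exp (c * ∑ i, (∑ j, A i j * v j)^2) ∂(gaussMatrix d n)
      = ((Real.sqrt (1-2*c*(∑ j, v j^2)))⁻¹)^d := by
  set g : (Fin n → ℝ) → ℝ := fun w => Real.exp (c * (0 + ∑ j, v j * w j)^2) with hg
  have hgp := gauss_pi_dim n c v 0 h
  have hgval : ∫ y, g y ∂(gaussPi n) = (Real.sqrt (1-2*c*(∑ j, v j^2)))⁻¹ := by
    rw [hgp.2]; simp
  have hpp := pi_prod_integral (gaussPi n) d g hgp.1
  have hcomp : ∀ A : Fin d → Fin n → ℝ,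
      Real.exp (c * ∑ i, (∑ j, A i j * v j)^2) = ∏ i, g (A i) := by
    intro A
    rw [hg]
    simp only [zero_add]
    rw [Finset.mul_sum, Real.exp_sum]
    refine Finset.prod_congr rfl fun i _ => ?_
    have : (∑ j, A i j * v j) = ∑ j, v j * A i j :=
      Finset.sum_congr rfl fun j _ => mul_comm _ _
    rw [this]
  constructor
  · exact hpp.1.congr (Filter.Eventually.of_forall fun A => (hcomp A).symm)
  · rw [show (fun A : Fin d → Fin n → ℝ => Real.exp (c * ∑ i, (∑ j, A i j * v j)^2))
        = fun A => ∏ i, g (A i) from funext hcomp]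
    rw [show gaussMatrix d n = Measure.pi fun _ : Fin d => gaussPi n from rfl, hpp.2, hgval]

lemma sqrt_pow_eq_exp (u : ℝ) (d : ℕ) (hu : 0 < u) :
    (Real.sqrt u)^d = Real.exp ((d : ℝ) * (Real.log u / 2)) := by
  calc (Real.sqrt u)^d = Real.exp (Real.log (Real.sqrt u)) ^ d := by
        rw [Real.exp_log (Real.sqrt_pos.mpr hu)]
    _ = Real.exp ((d : ℝ) * Real.log (Real.sqrt u)) := (Real.exp_nat_mul _ d).symm
    _ = Real.exp ((d : ℝ) * (Real.log u / 2)) := by rw [Real.log_sqrt hu.le]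

lemma chernoff_lower_s2 (d n : ℕ) (v : Fin n → ℝ) (hv : 0 < ∑ j, v j^2)
    (τ₂ : ℝ) (hτ₂ : τ₂ ∈ Set.Ioo (0:ℝ) 1) :
    (gaussMatrix d n {A | ∑ i, (∑ j, A i j * v j)^2 ≤ (1-τ₂)*d*(∑ j, v j^2)}).toReal
      ≤ Real.exp (((d:ℝ)/2) * (τ₂ + Real.log (1-τ₂))) := by
  obtain ⟨hτ₂0, hτ₂1⟩ := hτ₂
  set S : ℝ := ∑ j, v j^2 with hS
  have h1τ : (0:ℝ) < 1 - τ₂ := by linarith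
  set t : ℝ := -(τ₂/(2*S*(1-τ₂))) with ht
  have htneg : t ≤ 0 := by
    rw [ht, neg_nonpos]
    positivity
  have h2tS : 2*t*S < 1 := by
    have : 2*t*S = -(τ₂/(1-τ₂)) := by rw [ht]; field_simp
    rw [this]
    have : 0 < τ₂/(1-τ₂) := by positivity
    linarith
  have hmgf := gauss_matrix_mgf d n t v h2tS
  have h12t : 1 - 2*t*S = (1-τ₂)⁻¹ := by
    rw [ht]; field_simp; ring_nf
  have key := measure_le_le_exp_mul_mgf (μ := gaussMatrix d n)
    (X := fun A => ∑ i, (∑ j, A i j * v j)^2) ((1-τ₂)*d*S) htneg hmgf.1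
  refine key.trans ?_
  have hmgfval : mgf (fun A => ∑ i, (∑ j, A i j * v j)^2) (gaussMatrix d n) t
      = (Real.sqrt (1-τ₂))^d := by
    rw [mgf]
    rw [hmgf.2, h12t, Real.sqrt_inv, inv_inv]
  rw [hmgfval]
  have hne : -t * ((1-τ₂)*d*S) = (d:ℝ) * (τ₂/2) := by
    rw [ht]; field_simp
  rw [hne, sqrt_pow_eq_exp _ _ h1τ, ← Real.exp_add]
  apply le_of_eq
  congr 1
  ring

lemma chernoff_upper_s2 (d n : ℕ) (v : Fin n → ℝ) (hv : 0 < ∑ j, v j^2)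
    (τ₁ : ℝ) (hτ₁ : 0 < τ₁) :
    (gaussMatrix d n {A | (1+τ₁)*d*(∑ j, v j^2) ≤ ∑ i, (∑ j, A i j * v j)^2}).toReal
      ≤ Real.exp (-((d:ℝ)/2) * (τ₁ - Real.log (1+τ₁))) := by
  set S : ℝ := ∑ j, v j^2 with hS
  have h1τ : (0:ℝ) < 1 + τ₁ := by linarith
  set t : ℝ := τ₁/(2*S*(1+τ₁)) with ht
  have htpos : 0 ≤ t := by rw [ht]; positivity
  have h2tS : 2*t*S < 1 := by
    have he : 2*t*S = τ₁/(1+τ₁) := by rw [ht]; field_simp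
    rw [he, div_lt_one h1τ]; linarith
  have hmgf := gauss_matrix_mgf d n t v h2tS
  have h12t : 1 - 2*t*S = (1+τ₁)⁻¹ := by
    rw [ht]; field_simp; ring_nf
  have key := measure_ge_le_exp_mul_mgf (μ := gaussMatrix d n)
    (X := fun A => ∑ i, (∑ j, A i j * v j)^2) ((1+τ₁)*d*S) htpos hmgf.1
  refine key.trans ?_
  have hmgfval : mgf (fun A => ∑ i, (∑ j, A i j * v j)^2) (gaussMatrix d n) t
      = (Real.sqrt (1+τ₁))^d := by
    rw [mgf, hmgf.2, h12t, Real.sqrt_inv, inv_inv]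
  rw [hmgfval]
  have hne : -t * ((1+τ₁)*d*S) = -((d:ℝ) * (τ₁/2)) := by
    rw [ht]; field_simp
  rw [hne, sqrt_pow_eq_exp _ _ h1τ, ← Real.exp_add]
  apply le_of_eq
  congr 1
  ring

lemma norm2_nonneg {m : ℕ} (x : Fin m → ℝ) : 0 ≤ norm2 x := Real.sqrt_nonneg _

lemma norm2_eq_norm {m : ℕ} (x : Fin m → ℝ) :
    norm2 x = ‖(WithLp.equiv 2 (Fin m → ℝ)).symm x‖ := by
  rw [EuclideanSpace.norm_eq]
  simp [norm2, sq_abs]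

lemma norm2_add_le {m : ℕ} (x y : Fin m → ℝ) : norm2 (x + y) ≤ norm2 x + norm2 y := by
  rw [norm2_eq_norm, norm2_eq_norm, norm2_eq_norm]
  exact norm_add_le _ _

lemma norm2_sub_rev {m : ℕ} (x y : Fin m → ℝ) : norm2 (x - y) = norm2 (y - x) := by
  unfold norm2
  congr 1
  exact Finset.sum_congr rfl fun i _ => by simp [Pi.sub_apply]; ring

lemma mulVec'_sub {d n : ℕ} (A : Fin d → Fin n → ℝ) (x y : Fin n → ℝ) :
    mulVec' A x - mulVec' A y = mulVec' A (x - y) := by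
  funext i
  simp [mulVec', Pi.sub_apply, mul_sub, Finset.sum_sub_distrib]

lemma sq_le_imp_le {a b : ℝ} (ha : 0 ≤ a) (hb : 0 ≤ b) (h : a^2 ≤ b^2) : a ≤ b := by
  nlinarith

lemma det_recovery {n d : ℕ} (hd : 1 ≤ d)
    (δ : ℝ) (hδ : 0 < δ) (x_o : Fin n → ℝ)
    (C : Finset (Fin n → ℝ))
    (xtil : Fin n → ℝ) (hxtil : xtil ∈ C) (hdist : norm2 (x_o - xtil) ≤ δ)
    (τ₁ τ₂ ζ : ℝ) (hτ₁ : 0 < τ₁) (hτ₂ : τ₂ ∈ Set.Ioo (0 : ℝ) 1) (hζ : 0 ≤ ζ)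
    (A : Fin d → Fin n → ℝ)
    (hlow : ∀ c ∈ C, (1-τ₂)*d*(∑ j, ((c - x_o) j)^2) ≤ ∑ i, (∑ j, A i j * (c - x_o) j)^2)
    (hup : ∑ i, (∑ j, A i j * (x_o - xtil) j)^2 ≤ (1+τ₁)*d*(∑ j, ((x_o - xtil) j)^2)) :
    ∀ z : Fin d → ℝ, norm2 z ≤ ζ →
      ∀ xhat, IsCSPEstimate C A (mulVec' A x_o + z) xhat →
      norm2 (xhat - x_o)
        ≤ δ * Real.sqrt ((1 + τ₁) / (1 - τ₂)) + 2 * ζ / Real.sqrt ((1 - τ₂) * d) := by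
  obtain ⟨hτ₂0, hτ₂1⟩ := hτ₂
  have h1τ₂ : (0:ℝ) < 1 - τ₂ := by linarith
  have hdpos : (0:ℝ) < d := by exact_mod_cast hd
  intro z hz xhat hxhat
  set y : Fin d → ℝ := mulVec' A x_o + z with hy
  -- basic norm facts as sqrt of sums
  have hnormAv : ∀ v : Fin n → ℝ, norm2 (mulVec' A v)
      = Real.sqrt (∑ i, (∑ j, A i j * v j)^2) := fun v => rfl
  have hnormv : ∀ v : Fin n → ℝ, norm2 v = Real.sqrt (∑ j, (v j)^2) := fun v => rfl
  -- upper bound on ‖A(x_o - xtil)‖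
  have hupper : norm2 (mulVec' A (x_o - xtil))
      ≤ Real.sqrt ((1+τ₁)*d) * norm2 (x_o - xtil) := by
    rw [hnormAv, hnormv, ← Real.sqrt_mul (by positivity)]
    exact Real.sqrt_le_sqrt (by linarith [hup])
  -- lower bound for xhat
  have hlower : Real.sqrt ((1-τ₂)*d) * norm2 (xhat - x_o)
      ≤ norm2 (mulVec' A (xhat - x_o)) := by
    rw [hnormAv, hnormv, ← Real.sqrt_mul (by positivity)]
    exact Real.sqrt_le_sqrt (by linarith [hlow xhat hxhat.1])
  -- chain of inequalities
  have heq1 : mulVec' A (xhat - x_o) = (mulVec' A xhat - y) + z := by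
    rw [← mulVec'_sub, hy]
    funext i
    simp only [Pi.add_apply, Pi.sub_apply]
    ring
  have hchain : norm2 (mulVec' A (xhat - x_o))
      ≤ norm2 (mulVec' A (x_o - xtil)) + 2*ζ := by
    calc norm2 (mulVec' A (xhat - x_o)) = norm2 ((mulVec' A xhat - y) + z) := by rw [heq1]
      _ ≤ norm2 (mulVec' A xhat - y) + norm2 z := norm2_add_le _ _
      _ = norm2 (y - mulVec' A xhat) + norm2 z := by rw [norm2_sub_rev]
      _ ≤ norm2 (y - mulVec' A xtil) + ζ := by
          have := hxhat.2 xtil hxtil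
          linarith
      _ = norm2 (mulVec' A (x_o - xtil) + z) + ζ := by
          congr 2
          rw [← mulVec'_sub, hy]
          funext i
          simp only [Pi.add_apply, Pi.sub_apply]
          ring
      _ ≤ (norm2 (mulVec' A (x_o - xtil)) + norm2 z) + ζ := by
          have := norm2_add_le (mulVec' A (x_o - xtil)) z
          linarith
      _ ≤ norm2 (mulVec' A (x_o - xtil)) + 2*ζ := by linarith
  have hmain : Real.sqrt ((1-τ₂)*d) * norm2 (xhat - x_o)
      ≤ Real.sqrt ((1+τ₁)*d) * δ + 2*ζ := by
    have h1 : norm2 (mulVec' A (x_o - xtil)) ≤ Real.sqrt ((1+τ₁)*d) * δ := by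
      refine hupper.trans ?_
      have : (0:ℝ) ≤ Real.sqrt ((1+τ₁)*d) := Real.sqrt_nonneg _
      nlinarith
    linarith
  -- divide through
  have hspos : 0 < Real.sqrt ((1-τ₂)*d) := Real.sqrt_pos.mpr (by positivity)
  have hdiv : norm2 (xhat - x_o) ≤ (Real.sqrt ((1+τ₁)*d) * δ + 2*ζ) / Real.sqrt ((1-τ₂)*d) := by
    rw [le_div_iff₀ hspos]
    calc norm2 (xhat - x_o) * Real.sqrt ((1-τ₂)*d)
        = Real.sqrt ((1-τ₂)*d) * norm2 (xhat - x_o) := by ring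
      _ ≤ _ := hmain
  refine hdiv.trans (le_of_eq ?_)
  rw [add_div]
  congr 1
  rw [mul_comm, mul_div_assoc]
  congr 1
  rw [← Real.sqrt_div (by positivity : (0:ℝ) ≤ (1+τ₁)*d)]
  congr 1
  rw [mul_div_mul_right _ _ (ne_of_gt hdpos)]

end Aux

/-- Theorem 2 (CSP, individual recovery under deterministic noise). -/
theorem csp_deterministic_noise_individual
    (n d r : ℕ) (hd : 1 ≤ d)
    (δ : ℝ) (hδ : 0 < δ) (x_o : Fin n → ℝ)
    (C : Finset (Fin n → ℝ)) (hCne : C.Nonempty) (hCcard : C.card ≤ 2 ^ r)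
    (xtil : Fin n → ℝ) (hxtil : xtil ∈ C) (hdist : norm2 (x_o - xtil) ≤ δ)
    (τ₁ τ₂ ζ : ℝ) (hτ₁ : 0 < τ₁) (hτ₂ : τ₂ ∈ Set.Ioo (0 : ℝ) 1) (hζ : 0 ≤ ζ) :
    1 - 2 ^ r * Real.exp (((d : ℝ) / 2) * (τ₂ + Real.log (1 - τ₂)))
        - Real.exp (-((d : ℝ) / 2) * (τ₁ - Real.log (1 + τ₁)))
      ≤ (gaussMatrix d n {A | ∀ z : Fin d → ℝ, norm2 z ≤ ζ →
          ∀ xhat, IsCSPEstimate C A (mulVec' A x_o + z) xhat →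
          norm2 (xhat - x_o)
            ≤ δ * Real.sqrt ((1 + τ₁) / (1 - τ₂))
              + 2 * ζ / Real.sqrt ((1 - τ₂) * d)}).toReal := by
  set μ := gaussMatrix d n with hμ
  set E₂ : ℝ := Real.exp (((d : ℝ) / 2) * (τ₂ + Real.log (1 - τ₂))) with hE₂
  set E₁ : ℝ := Real.exp (-((d : ℝ) / 2) * (τ₁ - Real.log (1 + τ₁))) with hE₁
  have hE₂0 : 0 ≤ E₂ := Real.exp_nonneg _
  have hE₁0 : 0 ≤ E₁ := Real.exp_nonneg _
  -- measurability of the quadratic forms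
  have hXmeas : ∀ v : Fin n → ℝ,
      Measurable (fun A : Fin d → Fin n → ℝ => ∑ i, (∑ j, A i j * v j)^2) := by
    intro v
    apply Finset.measurable_sum
    intro i _
    exact ((Finset.measurable_sum _ fun j _ =>
      ((measurable_pi_apply j).comp (measurable_pi_apply i)).mul_const _)).pow_const 2
  -- good event
  set Good : Set (Fin d → Fin n → ℝ) :=
    {A | (∀ c ∈ C, (1-τ₂)*d*(∑ j, ((c - x_o) j)^2) ≤ ∑ i, (∑ j, A i j * (c - x_o) j)^2)
      ∧ ∑ i, (∑ j, A i j * (x_o - xtil) j)^2 ≤ (1+τ₁)*d*(∑ j, ((x_o - xtil) j)^2)} with hGoodDef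
  have hGoodMeas : MeasurableSet Good := by
    rw [hGoodDef]
    have e1 : {A : Fin d → Fin n → ℝ |
        (∀ c ∈ C, (1-τ₂)*d*(∑ j, ((c - x_o) j)^2) ≤ ∑ i, (∑ j, A i j * (c - x_o) j)^2)
        ∧ ∑ i, (∑ j, A i j * (x_o - xtil) j)^2 ≤ (1+τ₁)*d*(∑ j, ((x_o - xtil) j)^2)}
      = (⋂ c ∈ (C : Set (Fin n → ℝ)),
          {A : Fin d → Fin n → ℝ |
            (1-τ₂)*d*(∑ j, ((c - x_o) j)^2) ≤ ∑ i, (∑ j, A i j * (c - x_o) j)^2})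
        ∩ {A : Fin d → Fin n → ℝ |
            ∑ i, (∑ j, A i j * (x_o - xtil) j)^2 ≤ (1+τ₁)*d*(∑ j, ((x_o - xtil) j)^2)} := by
      ext A; simp [Set.mem_iInter]
    rw [e1]
    refine MeasurableSet.inter ?_ ?_
    · exact MeasurableSet.biInter C.countable_toSet fun c _ =>
        measurableSet_le measurable_const (hXmeas _)
    · exact measurableSet_le (hXmeas _) measurable_const
  -- Good is contained in the target set
  have hsub : Good ⊆ {A | ∀ z : Fin d → ℝ, norm2 z ≤ ζ →
      ∀ xhat, IsCSPEstimate C A (mulVec' A x_o + z) xhat →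
      norm2 (xhat - x_o)
        ≤ δ * Real.sqrt ((1 + τ₁) / (1 - τ₂)) + 2 * ζ / Real.sqrt ((1 - τ₂) * d)} := by
    intro A hA
    exact det_recovery hd δ hδ x_o C xtil hxtil hdist τ₁ τ₂ ζ hτ₁ hτ₂ hζ A hA.1 hA.2
  -- bad events
  set L : (Fin n → ℝ) → Set (Fin d → Fin n → ℝ) := fun c =>
    {A | ∑ i, (∑ j, A i j * (c - x_o) j)^2 < (1-τ₂)*d*(∑ j, ((c - x_o) j)^2)} with hL
  set U : Set (Fin d → Fin n → ℝ) :=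
    {A | (1+τ₁)*d*(∑ j, ((x_o - xtil) j)^2) < ∑ i, (∑ j, A i j * (x_o - xtil) j)^2} with hU
  have hcompl : Goodᶜ ⊆ (⋃ c ∈ (C : Set (Fin n → ℝ)), L c) ∪ U := by
    intro A hA
    simp only [hGoodDef, Set.mem_compl_iff, Set.mem_setOf_eq, not_and_or, not_forall, not_le] at hA
    rcases hA with ⟨c, hc, hlt⟩ | hlt
    · left
      exact Set.mem_biUnion hc hlt
    · right
      exact hlt
  -- bounds on individual bad events
  have hLbound : ∀ c ∈ C, (μ (L c)).toReal ≤ E₂ := by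
    intro c _
    rcases eq_or_lt_of_le (Finset.sum_nonneg fun j _ =>
      sq_nonneg ((c - x_o) j) : (0:ℝ) ≤ ∑ j, ((c - x_o) j)^2) with hzero | hpos
    · have hcx : ∀ j, (c - x_o) j = 0 := by
        intro j
        have := (Finset.sum_eq_zero_iff_of_nonneg
          (fun j _ => sq_nonneg ((c - x_o) j))).mp hzero.symm j (Finset.mem_univ j)
        nlinarith [this]
      have : L c = ∅ := by
        ext A
        simp only [hL, Set.mem_setOf_eq, Set.mem_empty_iff_false, iff_false, not_lt]
        have h1 : ∀ i, (∑ j, A i j * (c - x_o) j) = 0 := by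
          intro i; exact Finset.sum_eq_zero fun j _ => by rw [hcx j, mul_zero]
        have h2 : (∑ i, (∑ j, A i j * (c - x_o) j)^2) = 0 :=
          Finset.sum_eq_zero fun i _ => by rw [h1 i]; ring
        rw [h2, ← hzero]
        simp
      rw [this]
      simpa using hE₂0
    · calc (μ (L c)).toReal
          ≤ (μ {A | ∑ i, (∑ j, A i j * (c - x_o) j)^2
              ≤ (1-τ₂)*d*(∑ j, ((c - x_o) j)^2)}).toReal := by
            apply ENNReal.toReal_mono (measure_ne_top _ _)
            refine measure_mono fun A hA => ?_
            simp only [hL, Set.mem_setOf_eq] at hA ⊢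
            exact le_of_lt hA
        _ ≤ E₂ := chernoff_lower_s2 d n (c - x_o) hpos τ₂ hτ₂
  have hUbound : (μ U).toReal ≤ E₁ := by
    rcases eq_or_lt_of_le (Finset.sum_nonneg fun j _ =>
      sq_nonneg ((x_o - xtil) j) : (0:ℝ) ≤ ∑ j, ((x_o - xtil) j)^2) with hzero | hpos
    · have hcx : ∀ j, (x_o - xtil) j = 0 := by
        intro j
        have := (Finset.sum_eq_zero_iff_of_nonneg
          (fun j _ => sq_nonneg ((x_o - xtil) j))).mp hzero.symm j (Finset.mem_univ j)
        nlinarith [this]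
      have : U = ∅ := by
        ext A
        simp only [hU, Set.mem_setOf_eq, Set.mem_empty_iff_false, iff_false, not_lt]
        have h1 : ∀ i, (∑ j, A i j * (x_o - xtil) j) = 0 := by
          intro i; exact Finset.sum_eq_zero fun j _ => by rw [hcx j, mul_zero]
        have h2 : (∑ i, (∑ j, A i j * (x_o - xtil) j)^2) = 0 :=
          Finset.sum_eq_zero fun i _ => by rw [h1 i]; ring
        rw [h2, ← hzero]
        simp
      rw [this]
      simpa using hE₁0
    · calc (μ U).toReal
          ≤ (μ {A | (1+τ₁)*d*(∑ j, ((x_o - xtil) j)^2)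
              ≤ ∑ i, (∑ j, A i j * (x_o - xtil) j)^2}).toReal := by
            apply ENNReal.toReal_mono (measure_ne_top _ _)
            refine measure_mono fun A hA => ?_
            simp only [hU, Set.mem_setOf_eq] at hA ⊢
            exact le_of_lt hA
        _ ≤ E₁ := chernoff_upper_s2 d n (x_o - xtil) hpos τ₁ hτ₁
  -- union bound
  have hGc : (μ Goodᶜ).toReal ≤ 2^r * E₂ + E₁ := by
    have h1 : μ Goodᶜ ≤ ∑ c ∈ C, μ (L c) + μ U := by
      calc μ Goodᶜ ≤ μ ((⋃ c ∈ (C : Set (Fin n → ℝ)), L c) ∪ U) := measure_mono hcompl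
        _ ≤ μ (⋃ c ∈ (C : Set (Fin n → ℝ)), L c) + μ U := measure_union_le _ _
        _ ≤ ∑ c ∈ C, μ (L c) + μ U := by
            gcongr
            exact measure_biUnion_finset_le C L
    have h2 : (μ Goodᶜ).toReal ≤ (∑ c ∈ C, μ (L c) + μ U).toReal := by
      apply ENNReal.toReal_mono _ h1
      refine ENNReal.add_ne_top.mpr ⟨?_, measure_ne_top _ _⟩
      exact (ENNReal.sum_lt_top.mpr fun c _ => measure_lt_top _ _).ne
    refine h2.trans ?_
    rw [ENNReal.toReal_add ((ENNReal.sum_lt_top.mpr fun c _ => measure_lt_top _ _).ne)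
      (measure_ne_top _ _), ENNReal.toReal_sum (fun c _ => measure_ne_top _ _)]
    have h3 : ∑ c ∈ C, (μ (L c)).toReal ≤ (C.card : ℝ) * E₂ := by
      calc ∑ c ∈ C, (μ (L c)).toReal ≤ ∑ _c ∈ C, E₂ := Finset.sum_le_sum hLbound
        _ = (C.card : ℝ) * E₂ := by rw [Finset.sum_const, nsmul_eq_mul]
    have h4 : (C.card : ℝ) ≤ 2^r := by
      calc (C.card : ℝ) ≤ ((2^r : ℕ) : ℝ) := Nat.cast_le.mpr hCcard
        _ = 2^r := by push_cast; ring
    nlinarith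
  -- put everything together
  have hsplit : (μ Good).toReal + (μ Goodᶜ).toReal = 1 := by
    have := measure_add_measure_compl hGoodMeas (μ := μ)
    have h5 := congrArg ENNReal.toReal this
    rwa [ENNReal.toReal_add (measure_ne_top _ _) (measure_ne_top _ _),
      measure_univ, ENNReal.toReal_one] at h5
  have hfinal : 1 - 2^r * E₂ - E₁ ≤ (μ Good).toReal := by linarith
  refine hfinal.trans ?_
  exact ENNReal.toReal_mono (measure_ne_top _ _) (measure_mono hsub)
end

section
/- Lemma 1 (no dimension reduction for the full unit ball). Let n, d : ℕ with d < n. Then for every matrix A ∈ ℝ^{d×n} and every reconstruction map φ : ℝ^d → ℝ^n, there exists x ∈ ℝ^n with ‖x‖₂ ≤ 1 such that ‖φ(A x) − x‖₂ ≥ 1. In particular, the worst-case reconstruction error over the unit ball is at least 1 for any recovery scheme with fewer measurements than the ambient dimension. -/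
/-- Lemma 1 (no dimension reduction for the full unit ball). -/
theorem no_dimension_reduction_unit_ball
    (n d : ℕ) (hdn : d < n)
    (A : Matrix (Fin d) (Fin n) ℝ)
    (φ : EuclideanSpace ℝ (Fin d) → EuclideanSpace ℝ (Fin n)) :
    ∃ x : EuclideanSpace ℝ (Fin n), ‖x‖ ≤ 1 ∧ 1 ≤ ‖φ (WithLp.toLp 2 (A.mulVec x)) - x‖ := by
  -- find a nonzero kernel vector
  have hker : LinearMap.ker (Matrix.mulVecLin A) ≠ ⊥ := by
    apply LinearMap.ker_ne_bot_of_finrank_lt (f := Matrix.mulVecLin A)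
    simpa using hdn
  obtain ⟨y0, hy, hy0⟩ := Submodule.exists_mem_ne_zero_of_ne_bot hker
  let y : EuclideanSpace ℝ (Fin n) := WithLp.toLp 2 y0
  have hy0' : y ≠ 0 := by
    intro h; apply hy0; simpa [y] using congrArg WithLp.ofLp h
  -- normalize in Euclidean norm
  set z : EuclideanSpace ℝ (Fin n) := (‖y‖)⁻¹ • y with hz
  have hyn : ‖y‖ ≠ 0 := by
    simpa [norm_eq_zero] using hy0'
  have hznorm : ‖z‖ = 1 := by
    rw [hz, norm_smul, norm_inv, norm_norm]
    exact inv_mul_cancel₀ hyn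
  have hAy : A.mulVec y = 0 := by simpa [Matrix.mulVecLin, y] using hy
  have hAz : A.mulVec z = 0 := by
    have : A.mulVec z = (‖y‖)⁻¹ • A.mulVec y := A.mulVec_smul _ _
    rw [this, hAy, smul_zero]
  have hAnz : A.mulVec (WithLp.ofLp (-z)) = 0 := by
    rw [WithLp.ofLp_neg, Matrix.mulVec_neg, hAz, neg_zero]
  by_cases h : 1 ≤ ‖φ (WithLp.toLp 2 (A.mulVec z)) - z‖
  · exact ⟨z, le_of_eq hznorm, h⟩
  · refine ⟨-z, by simpa [hznorm] using (le_of_eq (norm_neg z)), ?_⟩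
    rw [hAnz, WithLp.toLp_zero]
    have key : (2 : ℝ) ≤ ‖φ (WithLp.toLp 2 (A.mulVec z)) - z‖ + ‖φ 0 - -z‖ := by
      have : ‖(φ (WithLp.toLp 2 (A.mulVec z)) - z) - (φ 0 - -z)‖ ≤ ‖φ (WithLp.toLp 2 (A.mulVec z)) - z‖ + ‖φ 0 - -z‖ :=
        norm_sub_le _ _
      calc (2:ℝ) = ‖(φ (WithLp.toLp 2 (A.mulVec z)) - z) - (φ 0 - -z)‖ := by
            rw [hAz, WithLp.toLp_zero]
            have : (φ 0 - z) - (φ 0 - -z) = (-2 : ℝ) • z := by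
              module
            rw [this, norm_smul, hznorm]
            norm_num
        _ ≤ _ := this
    linarith [le_of_not_ge h]
end

section
/- Proposition 2 (lower bound for strong CS-applicability). Let n, k, d : ℕ with k ≥ 1, n ≥ 2k and d ≤ 2k − 1. Then for every matrix A ∈ ℝ^{d×n} and every reconstruction map φ : ℝ^d → ℝ^n, there exists a k-sparse vector x ∈ ℝ^n with ‖x‖₂ ≤ 1 such that ‖φ(A x) − x‖₂ ≥ 1/2. Consequently, strong applicability of compressed sensing to the set Γ_k^n ∩ B₂^n(1) of k-sparse vectors in the unit ball requires at least 2k measurements. -/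
/-- Extension by zero of a vector in `ℝ^m` to `ℝ^n`, as a linear map. -/
noncomputable def csExtZero (m n : ℕ) : (Fin m → ℝ) →ₗ[ℝ] (Fin n → ℝ) where
  toFun y i := if h : (i : ℕ) < m then y ⟨i, h⟩ else 0
  map_add' y z := by funext i; by_cases h : (i : ℕ) < m <;> simp [h]
  map_smul' c y := by funext i; by_cases h : (i : ℕ) < m <;> simp [h]

/-- Proposition 2 (lower bound for strong CS-applicability): with `d ≤ 2k − 1`
measurements, any reconstruction map fails on some `k`-sparse vector of the unit
ball with error at least `1/2`. -/
theorem strong_cs_applicability_lower_bound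
    (n k d : ℕ) (hk : 1 ≤ k) (hn : 2 * k ≤ n) (hd : d ≤ 2 * k - 1)
    (A : Matrix (Fin d) (Fin n) ℝ)
    (φ : EuclideanSpace ℝ (Fin d) → EuclideanSpace ℝ (Fin n)) :
    ∃ x : EuclideanSpace ℝ (Fin n),
      ‖x‖ ≤ 1 ∧ Set.ncard {i : Fin n | x i ≠ 0} ≤ k ∧
      (1 : ℝ) / 2 ≤ ‖φ (WithLp.toLp 2 (A.mulVec x)) - x‖ := by
  classical
  set B : (Fin (2 * k) → ℝ) →ₗ[ℝ] (Fin d → ℝ) :=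
    (Matrix.mulVecLin A).comp (csExtZero (2 * k) n) with hB
  -- B is not injective for dimension reasons
  have hni : ¬ Function.Injective B := by
    intro hinj
    have h1 := LinearMap.finrank_le_finrank_of_injective hinj
    simp [Module.finrank_fin_fun] at h1
    omega
  have hker : ∃ y : Fin (2 * k) → ℝ, y ≠ 0 ∧ B y = 0 := by
    by_contra hc
    push_neg at hc
    exact hni (LinearMap.ker_eq_bot.mp (LinearMap.ker_eq_bot'.mpr fun m hm => by
      by_contra hm0; exact hc m hm0 hm))
  obtain ⟨y, hy0, hBy⟩ := hker
  set h : EuclideanSpace ℝ (Fin n) := WithLp.toLp 2 (csExtZero (2 * k) n y) with hh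
  have hAh : A.mulVec h = 0 := hBy
  have hhne : h ≠ 0 := by
    obtain ⟨j, hj⟩ := Function.ne_iff.mp hy0
    intro hc
    have hjn : (j : ℕ) < n := lt_of_lt_of_le j.isLt hn
    have : h ⟨j, hjn⟩ = 0 := by rw [hc]; rfl
    simp only [hh, csExtZero, LinearMap.coe_mk, AddHom.coe_mk] at this
    rw [dif_pos j.isLt] at this
    simp at this
    exact hj this
  have hnorm : (0 : ℝ) < ‖h‖ := norm_pos_iff.mpr hhne
  set g : EuclideanSpace ℝ (Fin n) := ‖h‖⁻¹ • h with hg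
  have hgnorm : ‖g‖ = 1 := by
    rw [hg, norm_smul, norm_inv, norm_norm, inv_mul_cancel₀ (ne_of_gt hnorm)]
  have hAg : A.mulVec g = 0 := by
    have : A.mulVec g = ‖h‖⁻¹ • A.mulVec h := by
      rw [hg]; exact Matrix.mulVec_smul A _ h
    rw [this, hAh, smul_zero]
  have hgzero : ∀ i : Fin n, 2 * k ≤ (i : ℕ) → g i = 0 := by
    intro i hi
    have : h i = 0 := by
      simp only [hh, csExtZero, LinearMap.coe_mk, AddHom.coe_mk]
      rw [dif_neg (by omega)]
    simp [hg, PiLp.smul_apply, this]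
  set u : EuclideanSpace ℝ (Fin n) := WithLp.toLp 2 (fun i => if (i : ℕ) < k then g i else 0) with hu
  set v : EuclideanSpace ℝ (Fin n) := WithLp.toLp 2 (fun i => if (i : ℕ) < k then 0 else -(g i)) with hv
  have huv : u - v = g := by
    ext i
    show u i - v i = g i
    by_cases hik : (i : ℕ) < k <;> simp [hu, hv, hik]
  have hAuv : A.mulVec u = A.mulVec v := by
    have h2 : A.mulVec u - A.mulVec v = 0 := by
      calc A.mulVec u - A.mulVec v = A.mulVec (u - v) := (Matrix.mulVec_sub A u v).symm
        _ = 0 := by rw [← WithLp.ofLp_sub, huv, hAg]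
    exact sub_eq_zero.mp h2
  -- norms
  have hnu : ‖u‖ ≤ 1 := by
    rw [← hgnorm, EuclideanSpace.norm_eq, EuclideanSpace.norm_eq]
    apply Real.sqrt_le_sqrt
    apply Finset.sum_le_sum
    intro i _
    by_cases hik : (i : ℕ) < k <;> simp [hu, hik] <;> positivity
  have hnv : ‖v‖ ≤ 1 := by
    rw [← hgnorm, EuclideanSpace.norm_eq, EuclideanSpace.norm_eq]
    apply Real.sqrt_le_sqrt
    apply Finset.sum_le_sum
    intro i _
    by_cases hik : (i : ℕ) < k <;> simp [hv, hik] <;> positivity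
  -- sparsity
  have hsu : Set.ncard {i : Fin n | u i ≠ 0} ≤ k := by
    have hsub : ∀ i ∈ {i : Fin n | u i ≠ 0}, ((⟨(i : ℕ) % k, Nat.mod_lt _ hk⟩ : Fin k)) ∈ (Set.univ : Set (Fin k)) := fun _ _ => trivial
    have hinj : Set.InjOn (fun i : Fin n => (⟨(i : ℕ) % k, Nat.mod_lt _ hk⟩ : Fin k)) {i : Fin n | u i ≠ 0} := by
      intro a ha b hb hab
      have ha' : (a : ℕ) < k := by
        by_contra hc; exact ha (by simp [hu, hc])
      have hb' : (b : ℕ) < k := by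
        by_contra hc; exact hb (by simp [hv, hu, hc])
      have := congrArg Fin.val hab
      simp [Nat.mod_eq_of_lt ha', Nat.mod_eq_of_lt hb'] at this
      exact Fin.ext this
    calc Set.ncard {i : Fin n | u i ≠ 0}
        ≤ Set.ncard (Set.univ : Set (Fin k)) :=
          Set.ncard_le_ncard_of_injOn _ hsub hinj (Set.finite_univ)
      _ = k := by rw [Set.ncard_univ, Nat.card_eq_fintype_card, Fintype.card_fin]
  have hsv : Set.ncard {i : Fin n | v i ≠ 0} ≤ k := by
    have hsub : ∀ i ∈ {i : Fin n | v i ≠ 0}, ((⟨((i : ℕ) - k) % k, Nat.mod_lt _ hk⟩ : Fin k)) ∈ (Set.univ : Set (Fin k)) := fun _ _ => trivial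
    have hmem : ∀ i : Fin n, v i ≠ 0 → k ≤ (i : ℕ) ∧ (i : ℕ) < 2 * k := by
      intro i hi
      constructor
      · by_contra hc
        apply hi
        simp only [hv]
        rw [if_pos (Nat.lt_of_not_le hc)]
      · by_contra hc
        apply hi
        have hz := hgzero i (Nat.le_of_not_lt hc)
        simp only [hv]
        rw [if_neg (by omega), hz, neg_zero]
    have hinj : Set.InjOn (fun i : Fin n => (⟨((i : ℕ) - k) % k, Nat.mod_lt _ hk⟩ : Fin k)) {i : Fin n | v i ≠ 0} := by
      intro a ha b hb hab
      obtain ⟨ha1, ha2⟩ := hmem a ha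
      obtain ⟨hb1, hb2⟩ := hmem b hb
      have := congrArg Fin.val hab
      simp [Nat.mod_eq_of_lt (by omega : (a : ℕ) - k < k),
        Nat.mod_eq_of_lt (by omega : (b : ℕ) - k < k)] at this
      exact Fin.ext (by omega)
    calc Set.ncard {i : Fin n | v i ≠ 0}
        ≤ Set.ncard (Set.univ : Set (Fin k)) :=
          Set.ncard_le_ncard_of_injOn _ hsub hinj (Set.finite_univ)
      _ = k := by rw [Set.ncard_univ, Nat.card_eq_fintype_card, Fintype.card_fin]
  -- final argument
  have hφ : φ (WithLp.toLp 2 (A.mulVec u)) = φ (WithLp.toLp 2 (A.mulVec v)) := by rw [hAuv]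
  have hsum : (1 : ℝ) ≤ ‖φ (WithLp.toLp 2 (A.mulVec u)) - u‖ + ‖φ (WithLp.toLp 2 (A.mulVec v)) - v‖ := by
    have e1 : u - v = (φ (WithLp.toLp 2 (A.mulVec u)) - v) - (φ (WithLp.toLp 2 (A.mulVec u)) - u) := by abel
    calc (1 : ℝ) = ‖g‖ := hgnorm.symm
      _ = ‖u - v‖ := by rw [huv]
      _ = ‖(φ (WithLp.toLp 2 (A.mulVec u)) - v) - (φ (WithLp.toLp 2 (A.mulVec u)) - u)‖ := by rw [← e1]
      _ ≤ ‖φ (WithLp.toLp 2 (A.mulVec u)) - v‖ + ‖φ (WithLp.toLp 2 (A.mulVec u)) - u‖ := norm_sub_le _ _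
      _ = ‖φ (WithLp.toLp 2 (A.mulVec v)) - v‖ + ‖φ (WithLp.toLp 2 (A.mulVec u)) - u‖ := by rw [hφ]
      _ = ‖φ (WithLp.toLp 2 (A.mulVec u)) - u‖ + ‖φ (WithLp.toLp 2 (A.mulVec v)) - v‖ := by ring
  rcases le_or_gt ((1 : ℝ) / 2) ‖φ (WithLp.toLp 2 (A.mulVec u)) - u‖ with hc | hc
  · exact ⟨u, hnu, hsu, hc⟩
  · exact ⟨v, hnv, hsv, by linarith⟩
end

section
/- Example 2 (rate-distortion achievability for sparse vectors in the ball). Let n, k : ℕ with 1 ≤ k ≤ n, ρ > 0 and 0 < δ ≤ ρ·√k. Then there exists a finite set C ⊆ ℝ^n, each of whose elements is k-sparse, with the properties: (i) for every k-sparse x ∈ ℝ^n with ‖x‖₂ ≤ ρ there exists c ∈ C with ‖x − c‖₂ ≤ δ; and (ii) |C| ≤ binom(n,k)·(5·√k·ρ/δ)^k, i.e., log₂|C| ≤ log₂ binom(n,k) + k·log₂(√k·ρ/δ) + 3k. -/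
/-- Example 2 (rate-distortion achievability for `k`-sparse vectors in the ball). -/
theorem sparse_ball_compression_code
    (n k : ℕ) (hk : 1 ≤ k) (hkn : k ≤ n) (ρ δ : ℝ) (hρ : 0 < ρ) (hδ : 0 < δ)
    (hδρ : δ ≤ ρ * Real.sqrt k) :
    ∃ C : Finset (EuclideanSpace ℝ (Fin n)),
      (∀ c ∈ C, Set.ncard {i : Fin n | c i ≠ 0} ≤ k) ∧
      (∀ x : EuclideanSpace ℝ (Fin n), ‖x‖ ≤ ρ →
        Set.ncard {i : Fin n | x i ≠ 0} ≤ k → ∃ c ∈ C, ‖x - c‖ ≤ δ) ∧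
      (C.card : ℝ) ≤ (n.choose k : ℝ) * (5 * Real.sqrt k * ρ / δ) ^ k ∧
      Real.logb 2 (C.card : ℝ)
        ≤ Real.logb 2 (n.choose k : ℝ)
          + (k : ℝ) * Real.logb 2 (Real.sqrt k * ρ / δ) + 3 * (k : ℝ) := by
  classical
  have hk1 : (1:ℝ) ≤ Real.sqrt k := by
    rw [show (1:ℝ) = Real.sqrt 1 by simp]
    exact Real.sqrt_le_sqrt (by exact_mod_cast hk)
  have hskpos : (0:ℝ) < Real.sqrt k := lt_of_lt_of_le one_pos hk1
  set ε : ℝ := δ / Real.sqrt k with hεdef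
  have hεpos : 0 < ε := div_pos hδ hskpos
  have hερ : ε ≤ ρ := by
    rw [hεdef, div_le_iff₀ hskpos]; linarith
  have hρε1 : (1:ℝ) ≤ ρ / ε := (one_le_div hεpos).2 hερ
  set M : ℕ := ⌈ρ / ε⌉₊ with hMdef
  have hMge : ρ / ε ≤ (M:ℝ) := Nat.le_ceil _
  have hMle : (M:ℝ) ≤ ρ / ε + 1 := le_of_lt (Nat.ceil_lt_add_one (by positivity))
  set G : Finset ℝ := (Finset.Icc (-(M:ℤ)) (M:ℤ)).image (fun j : ℤ => (j:ℝ) * ε) with hGdef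
  have hGcard : G.card ≤ 2 * M + 1 := by
    calc G.card ≤ (Finset.Icc (-(M:ℤ)) (M:ℤ)).card := Finset.card_image_le
    _ = 2 * M + 1 := by rw [Int.card_Icc]; omega
  have h0G : (0:ℝ) ∈ G := by
    rw [hGdef, Finset.mem_image]
    exact ⟨0, by simp, by simp⟩
  -- grid rounding
  have hround : ∀ t : ℝ, |t| ≤ ρ →
      ((round (t / ε) : ℝ) * ε ∈ G ∧ |t - (round (t / ε) : ℝ) * ε| ≤ ε / 2) := by
    intro t ht
    have h1 : |t / ε - (round (t / ε) : ℝ)| ≤ 1 / 2 := abs_sub_round (t / ε)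
    have h2 : |t / ε| ≤ ρ / ε := by
      rw [abs_div, abs_of_pos hεpos]
      gcongr
    constructor
    · rw [hGdef, Finset.mem_image]
      refine ⟨round (t / ε), ?_, rfl⟩
      rw [Finset.mem_Icc]
      have habs : |(round (t / ε) : ℝ)| < (M : ℝ) + 1 := by
        calc |(round (t / ε) : ℝ)| ≤ |t / ε| + 1/2 := by
              have := abs_sub_abs_le_abs_sub ((round (t / ε) : ℝ)) (t / ε)
              rw [abs_sub_comm] at h1
              linarith [this, h1]
        _ < (M : ℝ) + 1 := by linarith [hMge, h2]
      have : |round (t / ε)| < (M : ℤ) + 1 := by exact_mod_cast habs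
      rcases abs_lt.1 this with ⟨h3, h4⟩
      omega
    · have : t - (round (t / ε) : ℝ) * ε = (t / ε - (round (t / ε) : ℝ)) * ε := by
        rw [sub_mul, div_mul_cancel₀ _ hεpos.ne']
      rw [this, abs_mul, abs_of_pos hεpos]
      calc |t / ε - (round (t / ε) : ℝ)| * ε ≤ (1/2) * ε :=
            mul_le_mul_of_nonneg_right h1 hεpos.le
      _ = ε / 2 := by ring
  -- coordinates bounded by norm
  have hcoord : ∀ (x : EuclideanSpace ℝ (Fin n)) (i : Fin n), |x i| ≤ ‖x‖ := by
    intro x i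
    rw [EuclideanSpace.norm_eq]
    calc |x i| = Real.sqrt (‖x i‖ ^ 2) := by
          rw [Real.sqrt_sq_eq_abs, Real.norm_eq_abs, abs_abs]
    _ ≤ Real.sqrt (∑ j, ‖x j‖ ^ 2) :=
        Real.sqrt_le_sqrt (Finset.single_le_sum (f := fun j => ‖x j‖ ^ 2)
          (fun j _ => by positivity) (Finset.mem_univ i))
  -- the code
  set C : Finset (EuclideanSpace ℝ (Fin n)) :=
    (Finset.powersetCard k (Finset.univ : Finset (Fin n))).biUnion
      (fun S => (Fintype.piFinset (fun i => if i ∈ S then G else {0})).image (WithLp.toLp 2)) with hCdef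
  have hmemC : ∀ c : EuclideanSpace ℝ (Fin n), c ∈ C ↔
      ∃ S : Finset (Fin n), S.card = k ∧ ∀ i, c i ∈ (if i ∈ S then G else ({0} : Finset ℝ)) := by
    intro c
    rw [hCdef, Finset.mem_biUnion]
    constructor
    · rintro ⟨S, hS, hc⟩
      rw [Finset.mem_powersetCard_univ] at hS
      obtain ⟨a, ha, rfl⟩ := Finset.mem_image.1 hc
      exact ⟨S, hS, fun i => Fintype.mem_piFinset.1 ha i⟩
    · rintro ⟨S, hS, hc⟩
      exact ⟨S, Finset.mem_powersetCard_univ.2 hS, Finset.mem_image.2 ⟨c.ofLp, Fintype.mem_piFinset.2 hc, rfl⟩⟩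
  -- sparsity
  have hsparse : ∀ c ∈ C, Set.ncard {i : Fin n | c i ≠ 0} ≤ k := by
    intro c hc
    obtain ⟨S, hScard, hci⟩ := (hmemC c).1 hc
    have hsub : {i : Fin n | c i ≠ 0} ⊆ (S : Set (Fin n)) := by
      intro i hi
      by_contra hiS
      have := hci i
      rw [if_neg (by simpa using hiS)] at this
      simp only [Finset.mem_singleton] at this
      exact hi this
    calc Set.ncard {i : Fin n | c i ≠ 0} ≤ Set.ncard (S : Set (Fin n)) :=
          Set.ncard_le_ncard hsub (S.finite_toSet)
    _ = S.card := Set.ncard_coe_finset S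
    _ = k := hScard
  -- covering
  have hcover : ∀ x : EuclideanSpace ℝ (Fin n), ‖x‖ ≤ ρ →
      Set.ncard {i : Fin n | x i ≠ 0} ≤ k → ∃ c ∈ C, ‖x - c‖ ≤ δ := by
    intro x hxnorm hxsupp
    set s : Finset (Fin n) := {i : Fin n | x i ≠ 0}.toFinset with hsdef
    have hscard : s.card ≤ k := by
      rwa [hsdef, ← Set.ncard_eq_toFinset_card']
    obtain ⟨S, hsS, -, hScard⟩ := Finset.exists_subsuperset_card_eq (s.subset_univ) hscard
      (by simpa [Finset.card_univ] using hkn)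
    set c : EuclideanSpace ℝ (Fin n) :=
      WithLp.toLp 2 (fun i => if i ∈ S then (round (x i / ε) : ℝ) * ε else 0) with hcdef
    have hxle : ∀ i, |x i| ≤ ρ := fun i => le_trans (hcoord x i) hxnorm
    have hcC : c ∈ C := by
      rw [hmemC]
      refine ⟨S, hScard, fun i => ?_⟩
      by_cases hiS : i ∈ S
      · rw [if_pos hiS]
        show (if i ∈ S then (round (x i / ε) : ℝ) * ε else 0) ∈ G
        rw [if_pos hiS]
        exact (hround (x i) (hxle i)).1
      · rw [if_neg hiS]
        show (if i ∈ S then (round (x i / ε) : ℝ) * ε else 0) ∈ ({0} : Finset ℝ)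
        rw [if_neg hiS]
        simp
    refine ⟨c, hcC, ?_⟩
    have hterm : ∀ i, ‖(x - c) i‖ ^ 2 ≤ (if i ∈ S then (ε/2)^2 else 0) := by
      intro i
      rw [PiLp.sub_apply, Real.norm_eq_abs]
      by_cases hiS : i ∈ S
      · rw [if_pos hiS]
        have hc_i : c i = (round (x i / ε) : ℝ) * ε := by rw [hcdef]; simp [hiS]
        rw [hc_i]
        have := (hround (x i) (hxle i)).2
        have hεn : 0 ≤ ε / 2 := by positivity
        exact pow_le_pow_left₀ (abs_nonneg _) this 2
      · rw [if_neg hiS]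
        have hxi : x i = 0 := by
          by_contra hxi
          exact hiS (hsS (by rw [hsdef]; simp [hxi]))
        have hc_i : c i = 0 := by rw [hcdef]; simp [hiS]
        rw [hxi, hc_i]
        simp
    have hsum : ∑ i, ‖(x - c) i‖ ^ 2 ≤ (k : ℝ) * (ε/2)^2 := by
      calc ∑ i, ‖(x - c) i‖ ^ 2 ≤ ∑ i, (if i ∈ S then (ε/2)^2 else 0) :=
            Finset.sum_le_sum (fun i _ => hterm i)
      _ = ∑ i ∈ S, (ε/2)^2 := by rw [Finset.sum_ite_mem, Finset.univ_inter]
      _ = (k : ℝ) * (ε/2)^2 := by rw [Finset.sum_const, hScard, nsmul_eq_mul]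
    rw [EuclideanSpace.norm_eq]
    calc Real.sqrt (∑ i, ‖(x - c) i‖ ^ 2) ≤ Real.sqrt ((k : ℝ) * (ε/2)^2) :=
          Real.sqrt_le_sqrt hsum
    _ = Real.sqrt k * (ε/2) := by
          rw [Real.sqrt_mul (by positivity), Real.sqrt_sq (by positivity)]
    _ = δ / 2 := by rw [hεdef]; field_simp
    _ ≤ δ := by linarith
  -- cardinality (natural)
  have hcardnat : C.card ≤ n.choose k * (2 * M + 1) ^ k := by
    rw [hCdef]
    refine le_trans Finset.card_biUnion_le (le_trans (Finset.sum_le_sum fun S _ => Finset.card_image_le) ?_)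
    calc ∑ S ∈ Finset.powersetCard k (Finset.univ : Finset (Fin n)),
            (Fintype.piFinset (fun i => if i ∈ S then G else ({0} : Finset ℝ))).card
        ≤ ∑ S ∈ Finset.powersetCard k (Finset.univ : Finset (Fin n)), (2 * M + 1) ^ k := by
          apply Finset.sum_le_sum
          intro S hS
          rw [Finset.mem_powersetCard_univ] at hS
          rw [Fintype.card_piFinset]
          calc ∏ i, (if i ∈ S then G else ({0} : Finset ℝ)).card
              = ∏ i, (if i ∈ S then G.card else 1) := by
                apply Finset.prod_congr rfl
                intro i _
                by_cases hiS : i ∈ S <;> simp [hiS]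
          _ = ∏ i ∈ S, G.card := by rw [Finset.prod_ite_mem, Finset.univ_inter]
          _ = G.card ^ k := by rw [Finset.prod_const, hS]
          _ ≤ (2 * M + 1) ^ k := Nat.pow_le_pow_left hGcard k
    _ = n.choose k * (2 * M + 1) ^ k := by
          rw [Finset.sum_const, Finset.card_powersetCard, Finset.card_univ, Fintype.card_fin,
            smul_eq_mul]
  have h5 : (2 * (M:ℝ) + 1) ≤ 5 * Real.sqrt k * ρ / δ := by
    have : 5 * Real.sqrt k * ρ / δ = 5 * (ρ / ε) := by
      rw [hεdef]; field_simp
    rw [this]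
    linarith [hMle, hρε1]
  have hcardR : (C.card : ℝ) ≤ (n.choose k : ℝ) * (5 * Real.sqrt k * ρ / δ) ^ k := by
    calc (C.card : ℝ) ≤ ((n.choose k * (2 * M + 1) ^ k : ℕ) : ℝ) := by exact_mod_cast hcardnat
    _ = (n.choose k : ℝ) * (2 * (M:ℝ) + 1) ^ k := by push_cast; ring
    _ ≤ (n.choose k : ℝ) * (5 * Real.sqrt k * ρ / δ) ^ k := by
          apply mul_le_mul_of_nonneg_left _ (by positivity)
          exact pow_le_pow_left₀ (by positivity) h5 k
  refine ⟨C, hsparse, hcover, hcardR, ?_⟩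
  -- log bound
  have hCpos : 0 < (C.card : ℝ) := by
    obtain ⟨c, hcC, -⟩ := hcover 0 (by simp [hρ.le]) (by simp)
    exact_mod_cast Finset.card_pos.2 ⟨c, hcC⟩
  have hchoosepos : (0:ℝ) < (n.choose k : ℝ) := by
    exact_mod_cast Nat.choose_pos hkn
  have ht1 : (1:ℝ) ≤ Real.sqrt k * ρ / δ := by
    rw [le_div_iff₀ hδ]
    linarith [hδρ]
  have htpos : (0:ℝ) < Real.sqrt k * ρ / δ := lt_of_lt_of_le one_pos ht1
  have hlog5 : Real.logb 2 5 ≤ 3 := by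
    calc Real.logb 2 5 ≤ Real.logb 2 8 :=
          Real.logb_le_logb_of_le one_lt_two (by norm_num) (by norm_num)
    _ = 3 := by
          rw [show (8:ℝ) = 2 ^ (3:ℕ) by norm_num, Real.logb_pow]
          simp
  have key : Real.logb 2 (C.card : ℝ)
      ≤ Real.logb 2 ((n.choose k : ℝ) * (5 * Real.sqrt k * ρ / δ) ^ k) :=
    Real.logb_le_logb_of_le one_lt_two hCpos hcardR
  have hsplit : Real.logb 2 ((n.choose k : ℝ) * (5 * Real.sqrt k * ρ / δ) ^ k)
      = Real.logb 2 (n.choose k : ℝ)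
        + (k:ℝ) * (Real.logb 2 5 + Real.logb 2 (Real.sqrt k * ρ / δ)) := by
    have h5t : 5 * Real.sqrt k * ρ / δ = 5 * (Real.sqrt k * ρ / δ) := by ring
    rw [Real.logb_mul hchoosepos.ne' (by positivity), Real.logb_pow, h5t,
      Real.logb_mul (by norm_num) htpos.ne']
  rw [hsplit] at key
  have hlogt : 0 ≤ Real.logb 2 (Real.sqrt k * ρ / δ) := Real.logb_nonneg one_lt_two ht1
  have hkR : (0:ℝ) ≤ (k:ℝ) := Nat.cast_nonneg k
  nlinarith [mul_le_mul_of_nonneg_left hlog5 hkR]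
end
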